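/- arXiv:1301.2931 — 4 statements merged into one kernel-verified Lean document; each statement's English description precedes it below -/
import Mathlib

section
/- For n ≥ 1, if x and y are vertices of the hypercube Q_n whose Hamming distance is odd, then there exists a Hamiltonian path of Q_n from x to y. -/
/-- The `n`-dimensional hypercube: vertices are functions `Fin n → Bool`,
adjacent iff they differ in exactly one coordinate. -/
def Q (n : ℕ) : SimpleGraph (Fin n → Bool) where
  Adj x y := ∃! i, x i ≠ y i
  symm := by
    constructor
    rintro x y ⟨i, hi, hu⟩
    exact ⟨i, hi.symm, fun j hj => hu j hj.symm⟩
  loopless := by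
    constructor
    rintro x ⟨i, hi, -⟩
    exact hi rfl

/-- `M` is a matching (pairwise vertex-disjoint set of edges) of the graph `G`. -/
def IsMatchingOf {V : Type*} (G : SimpleGraph V) (M : Finset (Sym2 V)) : Prop :=
  (M : Set (Sym2 V)) ⊆ G.edgeSet ∧
    (M : Set (Sym2 V)).Pairwise fun e f => ∀ v, v ∈ e → v ∉ f

/-- The edge `e` is `j`-dimensional: its endpoints differ exactly in coordinate `j`. -/
def DimEdge (n : ℕ) (j : Fin n) (e : Sym2 (Fin n → Bool)) : Prop :=
  ∃ x y, e = s(x, y) ∧ x j ≠ y j ∧ ∀ i, i ≠ j → x i = y i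

/-- The distance between two edges: minimum distance between their endpoints. -/
noncomputable def edgeDist (n : ℕ) (e f : Sym2 (Fin n → Bool)) : ℕ :=
  sInf {d | ∃ u v, u ∈ e ∧ v ∈ f ∧ d = (Q n).dist u v}

def fpar (n : ℕ) (x : Fin n → Bool) : ZMod 2 := ∑ i, if x i then 1 else 0

lemma fpar_cons (n : ℕ) (b : Bool) (u : Fin n → Bool) :
    fpar (n+1) (Fin.cons b u) = (if b then 1 else 0) + fpar n u := by
  rw [fpar, fpar, Fin.sum_univ_succ]
  simp only [Fin.cons_zero, Fin.cons_succ]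

lemma Z2 : ∀ a b : ZMod 2, a + b = 1 → a = b + 1 := by decide
lemma Z3 : ∀ a b : ZMod 2, a = b + 1 → a ≠ b := by decide
lemma Z4 : ∀ p q a b : ZMod 2, p + a ≠ q + b → p ≠ q → a = b := by decide

lemma bool_cover (a b c : Bool) (h : b ≠ c) : a = b ∨ a = c := by
  cases a <;> cases b <;> cases c <;> simp_all

lemma adj_fpar {n} {u v : Fin n → Bool} (h : (Q n).Adj u v) : fpar n u = fpar n v + 1 := by
  obtain ⟨i, hi, hu⟩ := h
  have key : ∀ j, ((if u j then (1:ZMod 2) else 0) + (if v j then 1 else 0))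
      = if j = i then 1 else 0 := by
    intro j
    by_cases hj : j = i
    · subst hj
      cases h1 : u j <;> cases h2 : v j <;> simp_all
    · have huv : u j = v j := by
        by_contra hne; exact hj (hu j hne)
      rw [huv]
      cases v j <;> simp [hj] <;> decide
  have hsum : fpar n u + fpar n v = 1 := by
    unfold fpar
    rw [← Finset.sum_add_distrib, Finset.sum_congr rfl (fun j _ => key j)]
    simp
  exact Z2 _ _ hsum

lemma adj_cons_cons {n} (b : Bool) {u v : Fin n → Bool} (h : (Q n).Adj u v) :
    (Q (n+1)).Adj (Fin.cons b u) (Fin.cons b v) := by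
  obtain ⟨i, hi, hu⟩ := h
  refine ⟨i.succ, by simpa using hi, ?_⟩
  intro j hj
  rcases Fin.eq_zero_or_eq_succ j with rfl | ⟨k, rfl⟩
  · simp at hj
  · simp only [Fin.cons_succ] at hj
    exact congrArg Fin.succ (hu k hj)

lemma adj_cons_flip {n} {b c : Bool} (h : b ≠ c) (u : Fin n → Bool) :
    (Q (n+1)).Adj (Fin.cons b u) (Fin.cons c u) := by
  refine ⟨0, by simpa using h, ?_⟩
  intro j hj
  rcases Fin.eq_zero_or_eq_succ j with rfl | ⟨k, rfl⟩
  · rfl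
  · simp at hj

lemma flip_adj {n} (u : Fin n → Bool) (i : Fin n) :
    (Q n).Adj u (Function.update u i (!u i)) := by
  refine ⟨i, by simp, ?_⟩
  intro j hj
  by_contra hne
  rw [Function.update_of_ne hne] at hj
  exact hj rfl

lemma walk_of_chain {V : Type*} {G : SimpleGraph V} :
    ∀ (l : List V), l ≠ [] → l.Chain' G.Adj →
      ∀ x y, l.head? = some x → l.getLast? = some y →
      ∃ p : G.Walk x y, p.support = l := by
  intro l
  induction l with
  | nil => intro h; exact absurd rfl h
  | cons a t ih =>
    intro _ hc x y hx hy
    cases t with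
    | nil =>
      have hax : a = x := by simpa using hx
      have hay : a = y := by simpa using hy
      subst hax; subst hay
      exact ⟨SimpleGraph.Walk.nil, rfl⟩
    | cons b t' =>
      have hax : a = x := by simpa using hx
      subst hax
      obtain ⟨hab, hc'⟩ := List.isChain_cons_cons.mp hc
      have hy' : (b :: t').getLast? = some y := by
        rw [← hy, List.getLast?_cons_cons]
      obtain ⟨p, hp⟩ := ih (by simp) hc' b y rfl hy'
      exact ⟨SimpleGraph.Walk.cons hab p, by simp [hp]⟩

lemma walk_par {n} : ∀ {u v : Fin n → Bool} (q : (Q n).Walk u v),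
    fpar n u = fpar n v + (q.length : ZMod 2) := by
  intro u v q
  induction q with
  | nil => simp
  | cons h q ih =>
    rw [SimpleGraph.Walk.length_cons, adj_fpar h, ih]
    push_cast
    ring

lemma key : ∀ (n : ℕ) (x y : Fin n → Bool), fpar n x ≠ fpar n y →
    ∃ l : List (Fin n → Bool), l.Chain' (Q n).Adj ∧ l.head? = some x ∧
      l.getLast? = some y ∧ l.Nodup ∧ ∀ v, v ∈ l := by
  intro n
  induction n with
  | zero =>
    intro x y h
    exact absurd (by simp [fpar]) h
  | succ n ih =>
    intro x y h
    cases n with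
    | zero =>
      have hxy : x 0 ≠ y 0 := by
        intro he
        apply h
        have hxe : x = y := funext fun i => by
          have hi : i = 0 := Fin.ext (by omega)
          rw [hi]; exact he
        rw [hxe]
      refine ⟨[x, y], ?_, rfl, rfl, ?_, ?_⟩
      · exact List.isChain_cons_cons.mpr
          ⟨⟨0, hxy, fun j hj => Fin.ext (by omega)⟩, List.isChain_singleton y⟩
      · refine List.nodup_cons.mpr ⟨?_, List.nodup_singleton y⟩
        simp only [List.mem_singleton]
        intro he; exact hxy (by rw [he])
      · intro v
        rcases bool_cover (v 0) (x 0) (y 0) hxy with hv | hv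
        · have hve : v = x := funext fun i => by
            have hi : i = 0 := Fin.ext (by omega)
            rw [hi]; exact hv
          simp [hve]
        · have hve : v = y := funext fun i => by
            have hi : i = 0 := Fin.ext (by omega)
            rw [hi]; exact hv
          simp [hve]
    | succ m =>
      rcases eq_or_ne (x 0) (y 0) with h0 | h0
      · -- same first coordinate
        have hpar : fpar (m+1) (Fin.tail x) ≠ fpar (m+1) (Fin.tail y) := by
          intro e
          apply h
          conv_lhs => rw [← Fin.cons_self_tail x]
          conv_rhs => rw [← Fin.cons_self_tail y]
          rw [fpar_cons, fpar_cons, h0, e]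
        obtain ⟨P, hcP, hhP, hlP, hnP, hmP⟩ := ih _ _ hpar
        cases P with
        | nil => simp at hhP
        | cons a t =>
          have ha : a = Fin.tail x := by simpa using hhP
          subst ha
          cases t with
          | nil =>
            have he : Fin.tail x = Fin.tail y := by simpa using hlP
            exact absurd (by rw [he]) hpar
          | cons z rest =>
            obtain ⟨haz, hcP'⟩ := List.isChain_cons_cons.mp hcP
            have hparz : fpar (m+1) (Fin.tail x) ≠ fpar (m+1) z := Z3 _ _ (adj_fpar haz)
            obtain ⟨lB, hcB, hhB, hlB, hnB, hmB⟩ := ih _ _ hparz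
            cases lB with
            | nil => simp at hhB
            | cons b0 tB =>
            have hb0 : b0 = Fin.tail x := by simpa using hhB
            subst hb0
            refine ⟨(x :: List.map (Fin.cons (!(x 0))) (Fin.tail x :: tB)) ++
                List.map (Fin.cons (x 0)) (z :: rest), ?_, ?_, ?_, ?_, ?_⟩
            · rw [List.Chain', List.isChain_append]
              refine ⟨?_, (List.isChain_map _).mpr (hcP'.imp fun a b hab => adj_cons_cons _ hab), ?_⟩
              · rw [List.isChain_cons]
                refine ⟨?_, (List.isChain_map _).mpr (hcB.imp fun a b hab => adj_cons_cons _ hab)⟩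
                intro w hw
                simp only [List.map_cons, List.head?_cons, Option.mem_def,
                  Option.some.injEq] at hw
                subst hw
                have hadj := adj_cons_flip (show x 0 ≠ !(x 0) by simp) (Fin.tail x)
                rwa [Fin.cons_self_tail] at hadj
              · intro u hu v hv
                simp only [List.map_cons, List.getLast?_cons_cons] at hu
                rw [show ((Fin.cons (!(x 0)) (Fin.tail x) :: List.map (Fin.cons (!(x 0))) tB).getLast?
                    = (List.map (Fin.cons (!(x 0))) (Fin.tail x :: tB)).getLast?) from rfl,
                  List.getLast?_map, hlB] at hu
                simp only [Option.map_some, Option.mem_def, Option.some.injEq] at hu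
                simp only [List.map_cons, List.head?_cons, Option.mem_def,
                  Option.some.injEq] at hv
                subst hu; subst hv
                exact adj_cons_flip (by simp) z
            · rfl
            · rw [List.getLast?_append, List.getLast?_map]
              rw [show (z :: rest).getLast? = (Fin.tail x :: z :: rest).getLast? from
                (List.getLast?_cons_cons).symm, hlP]
              simp [h0, Fin.cons_self_tail]
            · rw [List.nodup_append]
              refine ⟨?_, (hnP.of_cons).map (Fin.cons_right_injective _), ?_⟩
              · rw [List.nodup_cons]
                refine ⟨?_, hnB.map (Fin.cons_right_injective _)⟩
                intro hmem
                obtain ⟨u, -, he⟩ := List.mem_map.mp hmem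
                have h00 := congrFun he 0
                simp only [Fin.cons_zero] at h00
                simp at h00
              · rw [← List.disjoint_iff_ne, List.disjoint_left]
                rintro a ha hb
                obtain ⟨u, hu, rfl⟩ := List.mem_map.mp hb
                rcases List.mem_cons.mp ha with hax | hax
                · have h2 : Fin.tail x = u := by
                    have h3 := congrArg Fin.tail hax.symm
                    rwa [Fin.tail_cons] at h3
                  rw [← h2] at hu
                  exact (List.nodup_cons.mp hnP).1 hu
                · obtain ⟨w, -, he⟩ := List.mem_map.mp hax
                  have h00 := congrFun he 0
                  simp only [Fin.cons_zero] at h00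
                  simp at h00
            · intro v
              rcases bool_cover (v 0) (x 0) (!(x 0)) (by simp) with hv | hv
              · rcases List.mem_cons.mp (hmP (Fin.tail v)) with he | he
                · have : v = x := by
                    rw [← Fin.cons_self_tail v, hv, he, Fin.cons_self_tail]
                  simp [this]
                · refine List.mem_append.mpr (Or.inr (List.mem_map.mpr ⟨Fin.tail v, he, ?_⟩))
                  rw [← hv, Fin.cons_self_tail]
              · refine List.mem_append.mpr (Or.inl (List.mem_cons.mpr (Or.inr
                  (List.mem_map.mpr ⟨Fin.tail v, hmB _, ?_⟩))))
                rw [← hv, Fin.cons_self_tail]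
      · -- different first coordinates
        have hb : (if x 0 then (1:ZMod 2) else 0) ≠ (if y 0 then 1 else 0) := by
          cases hx0 : x 0 <;> cases hy0 : y 0 <;> simp_all <;> decide
        have hpar : fpar (m+1) (Fin.tail x) = fpar (m+1) (Fin.tail y) := by
          refine Z4 _ _ _ _ ?_ hb
          rw [← fpar_cons, ← fpar_cons, Fin.cons_self_tail, Fin.cons_self_tail]
          exact h
        have hparw : fpar (m+1) (Fin.tail x)
            ≠ fpar (m+1) (Function.update (Fin.tail x) 0 (!(Fin.tail x 0))) :=
          Z3 _ _ (adj_fpar (flip_adj _ _))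
        obtain ⟨lA, hcA, hhA, hlA, hnA, hmA⟩ := ih _ _ hparw
        have hparw' : fpar (m+1) (Function.update (Fin.tail x) 0 (!(Fin.tail x 0)))
            ≠ fpar (m+1) (Fin.tail y) := fun e => hparw (hpar.trans e.symm)
        obtain ⟨lB, hcB, hhB, hlB, hnB, hmB⟩ := ih _ _ hparw'
        refine ⟨List.map (Fin.cons (x 0)) lA ++ List.map (Fin.cons (y 0)) lB, ?_, ?_, ?_, ?_, ?_⟩
        · rw [List.Chain', List.isChain_append]
          refine ⟨(List.isChain_map _).mpr (hcA.imp fun a b hab => adj_cons_cons _ hab),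
                  (List.isChain_map _).mpr (hcB.imp fun a b hab => adj_cons_cons _ hab), ?_⟩
          intro u hu v hv
          rw [List.getLast?_map, hlA] at hu
          rw [List.head?_map, hhB] at hv
          simp only [Option.map_some, Option.mem_def, Option.some.injEq] at hu hv
          subst hu; subst hv
          exact adj_cons_flip h0 _
        · rw [List.head?_append, List.head?_map, hhA]
          simp [Fin.cons_self_tail]
        · rw [List.getLast?_append, List.getLast?_map, hlB]
          simp [Fin.cons_self_tail]
        · rw [List.nodup_append]
          refine ⟨hnA.map (Fin.cons_right_injective _), hnB.map (Fin.cons_right_injective _), ?_⟩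
          rw [← List.disjoint_iff_ne, List.disjoint_left]
          rintro a ha hb'
          obtain ⟨u, -, rfl⟩ := List.mem_map.mp ha
          obtain ⟨w, -, he⟩ := List.mem_map.mp hb'
          have h00 := congrFun he 0
          simp only [Fin.cons_zero] at h00
          exact h0 h00.symm
        · intro v
          rcases bool_cover (v 0) (x 0) (y 0) h0 with hv | hv
          · refine List.mem_append.mpr (Or.inl (List.mem_map.mpr ⟨Fin.tail v, hmA _, ?_⟩))
            rw [← hv, Fin.cons_self_tail]
          · refine List.mem_append.mpr (Or.inr (List.mem_map.mpr ⟨Fin.tail v, hmB _, ?_⟩))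
            rw [← hv, Fin.cons_self_tail]


theorem stmt_2 (n : ℕ) (hn : 1 ≤ n) (x y : Fin n → Bool)
    (h : Odd ((Q n).dist x y)) :
    ∃ p : (Q n).Walk x y, p.IsHamiltonian := by
  classical
  have hdpos : 0 < (Q n).dist x y := h.pos
  have hreach : (Q n).Reachable x y := by
    by_contra hr
    rw [SimpleGraph.dist_eq_zero_of_not_reachable hr] at hdpos
    exact absurd hdpos (by omega)
  obtain ⟨p, hp⟩ := hreach.exists_walk_length_eq_dist
  have hne : fpar n x ≠ fpar n y := by
    have h1 : fpar n x = fpar n y + (p.length : ZMod 2) := walk_par p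
    obtain ⟨k, hk⟩ := h
    rw [hp, hk] at h1
    push_cast at h1
    have h2 : (2 : ZMod 2) = 0 := rfl
    rw [h2, zero_mul, zero_add] at h1
    exact Z3 _ _ h1
  obtain ⟨l, hc, hh, hl, hnd, hm⟩ := key n x y hne
  obtain ⟨q, hq⟩ := walk_of_chain l (by rintro rfl; simp at hh) hc x y hh hl
  exact ⟨q, fun v => by rw [hq]; exact List.count_eq_one_of_mem hnd (hm v)⟩
end

section
/- For n ≥ 2, let x and y be vertices of Q_n at odd Hamming distance and let e be an edge of Q_n with e ≠ xy. Then there exists a Hamiltonian path of Q_n from x to y that passes through the edge e. -/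
namespace HQ

abbrev V (n : ℕ) := Fin n → Bool

open SimpleGraph Walk List

def flip {n : ℕ} (j : Fin n) (v : V n) : V n := Function.update v j (!(v j))
def par {n : ℕ} (v : V n) : ZMod 2 := ∑ i, if v i then 1 else 0
def inj {m : ℕ} (b : Bool) (v : V m) : V (m + 1) := Fin.snoc v b
def HamE (m : ℕ) : Prop := ∀ x y : V m, par x ≠ par y → ∀ e ∈ (Q m).edgeSet,
  e ≠ s(x, y) → ∃ p : (Q m).Walk x y, p.IsHamiltonian ∧ e ∈ p.edges

-- from a.lean



/-- flip coordinate `j` -/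

@[simp] lemma flip_apply_self {n} (j : Fin n) (v : V n) : flip j v j = !(v j) := by
  simp [flip]

@[simp] lemma flip_apply_ne {n} (j i : Fin n) (v : V n) (h : i ≠ j) : flip j v i = v i := by
  simp [flip, Function.update_of_ne h]

@[simp] lemma flip_flip {n} (j : Fin n) (v : V n) : flip j (flip j v) = v := by
  funext i
  by_cases h : i = j
  · subst h; simp
  · simp [h]

lemma adj_flip {n} (j : Fin n) (v : V n) : (Q n).Adj v (flip j v) := by
  refine ⟨j, by simp, ?_⟩
  intro i hi
  by_contra h
  exact hi (by simp [flip_apply_ne j i v h])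

lemma adj_iff_flip {n} {x y : V n} : (Q n).Adj x y ↔ ∃ j, y = flip j x := by
  constructor
  · rintro ⟨j, hj, hu⟩
    refine ⟨j, funext fun i => ?_⟩
    by_cases h : i = j
    · subst h
      rcases Bool.eq_not_of_ne (Ne.symm hj) with h'
      simp [h']
    · have : ¬ x i ≠ y i := fun hc => h (hu i hc)
      simp only [ne_eq, not_not] at this
      simp [flip_apply_ne j i x h, this.symm]
  · rintro ⟨j, rfl⟩
    exact adj_flip j x

lemma flip_ne {n} (j : Fin n) (v : V n) : flip j v ≠ v := by
  intro h
  have := congrFun h j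
  simp at this



-- from b.lean



lemma par_flip {n} (j : Fin n) (v : V n) : par (flip j v) = par v + 1 := by
  unfold par
  rw [show (∑ i, if flip j v i then (1:ZMod 2) else 0) =
      ∑ i, ((if v i then (1:ZMod 2) else 0) + if i = j then 1 else 0) from ?_]
  · rw [Finset.sum_add_distrib]
    simp
  · apply Finset.sum_congr rfl
    intro i _
    by_cases h : i = j
    · subst h
      simp [flip]
      cases v i <;> simp <;> decide
    · simp [flip, Function.update_of_ne h, h]

lemma par_adj {n} {x y : V n} (h : (Q n).Adj x y) : par y = par x + 1 := by
  rcases adj_iff_flip.mp h with ⟨j, rfl⟩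
  exact par_flip j x

lemma walk_par {n} {x y : V n} (p : (Q n).Walk x y) :
    (p.length : ZMod 2) = par y - par x := by
  induction p with
  | nil => simp
  | cons h p ih =>
    rw [SimpleGraph.Walk.length_cons]
    push_cast
    rw [ih, par_adj h]
    ring

lemma par_ne_of_odd_dist {n} {x y : V n} (h : Odd ((Q n).dist x y)) : par x ≠ par y := by
  have h0 : (Q n).dist x y ≠ 0 := by
    rintro h0
    rw [h0] at h
    simp at h
  obtain ⟨p, hp⟩ := SimpleGraph.exists_walk_of_dist_ne_zero h0
  have := walk_par p
  rw [hp] at this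
  rcases h with ⟨k, hk⟩
  intro hxy
  rw [hxy, sub_self, hk] at this
  push_cast at this
  rw [show ((2:ZMod 2) * k + 1) = 1 by rw [show (2:ZMod 2) = 0 by decide]; ring] at this
  exact one_ne_zero this


-- from c.lean



lemma inj_injective {m : ℕ} (b : Bool) : Function.Injective (inj (m := m) b) := by
  intro u v h
  funext i
  have := congrFun h i.castSucc
  simpa [inj] using this

lemma adj_inj {m : ℕ} (b : Bool) {u v : V m} (h : (Q m).Adj u v) :
    (Q (m + 1)).Adj (inj b u) (inj b v) := by
  obtain ⟨i, hi, hu⟩ := h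
  refine ⟨i.castSucc, by simpa [inj] using hi, ?_⟩
  intro j hj
  rcases Fin.eq_castSucc_or_eq_last j with ⟨j', rfl⟩ | rfl
  · simp only [inj, Fin.snoc_castSucc] at hj
    exact congrArg Fin.castSucc (hu j' hj)
  · simp [inj] at hj

@[reducible] def homInj (m : ℕ) (b : Bool) : Q m →g Q (m + 1) where
  toFun := inj b
  map_rel' := fun h => adj_inj b h
lemma adj_cross {m : ℕ} {b c : Bool} (v : V m) (h : b ≠ c) :
    (Q (m + 1)).Adj (inj b v) (inj c v) := by
  refine ⟨Fin.last m, by simp [inj]; exact h, ?_⟩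
  intro j hj
  rcases Fin.eq_castSucc_or_eq_last j with ⟨j', rfl⟩ | rfl
  · simp [inj] at hj
  · rfl

lemma inj_ne_inj {m : ℕ} {b c : Bool} (h : b ≠ c) (u v : V m) : inj b u ≠ inj c v := by
  intro hc
  have := congrFun hc (Fin.last m)
  simp [inj] at this
  exact h this

lemma eq_inj {m : ℕ} (v : V (m + 1)) : v = inj (v (Fin.last m)) (Fin.init v) := by
  simp [inj, Fin.snoc_init_self]


lemma par_inj {m : ℕ} (b : Bool) (v : V m) :
    par (inj b v) = par v + if b then 1 else 0 := by
  unfold par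
  rw [Fin.sum_univ_castSucc]
  simp [inj]



-- from e.lean


lemma reverse_ham {V : Type*} [DecidableEq V] [Fintype V] {G : SimpleGraph V} {x y : V}
    {p : G.Walk x y} (hp : p.IsHamiltonian) : p.reverse.IsHamiltonian := by
  intro v
  rw [Walk.support_reverse, List.count_reverse]
  exact hp v

lemma cons_decomp {V : Type*} {G : SimpleGraph V} {x y : V} (p : G.Walk x y) (hxy : x ≠ y) :
    ∃ (v1 : V) (h : G.Adj x v1) (p2 : G.Walk v1 y), p = Walk.cons h p2 := by
  cases p with
  | nil => exact absurd rfl hxy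
  | cons h p2 => exact ⟨_, h, p2, rfl⟩

lemma head_ne_of_reverse {α : Type*} {l l' : List α} {f f' : α}
    (hnd : (f :: l).Nodup) (hl : l ≠ []) (hrev : (f :: l).reverse = f' :: l') : f ≠ f' := by
  intro hff
  subst hff
  rw [List.reverse_cons] at hrev
  have hf : f ∈ l := by
    rcases l.eq_nil_or_concat with rfl | ⟨t, a, rfl⟩
    · exact absurd rfl hl
    · rw [List.concat_eq_append, List.reverse_append] at hrev
      simp only [List.reverse_cons, List.reverse_nil, List.nil_append, List.cons_append] at hrev
      have : f = a := (List.cons_eq_cons.mp hrev).1.symm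
      subst this
      simp
  exact (List.nodup_cons.mp hnd).1 hf

lemma zmod2_ne_add_one {a b : ZMod 2} (h : a ≠ b + 1) : a + 1 ≠ b := by
  intro hc
  apply h
  rw [← hc, add_assoc]
  rw [show (1 : ZMod 2) + 1 = 0 by decide, add_zero]
  


-- from d.lean



lemma count_support_map {m : ℕ} (b : Bool) {x y : V m} (p : (Q m).Walk x y) (u : V m) :
    ((p.map (homInj m b)).support).count (inj b u) = p.support.count u := by
  rw [Walk.support_map]
  exact List.count_map_of_injective _ _ (inj_injective b) u

lemma count_support_map_ne {m : ℕ} {b c : Bool} (h : b ≠ c) {x y : V m}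
    (p : (Q m).Walk x y) (u : V m) :
    ((p.map (homInj m b)).support).count (inj c u) = 0 := by
  rw [Walk.support_map, List.count_eq_zero]
  intro hc
  rcases List.mem_map.mp hc with ⟨w, _, hw⟩
  exact inj_ne_inj h w u hw

lemma glue {m : ℕ} {b c : Bool} (hbc : b ≠ c) {x v1 y : V m} (h : (Q m).Adj x v1)
    (P2 : (Q m).Walk v1 y) (hP : (Walk.cons h P2).IsHamiltonian)
    (H : (Q m).Walk x v1) (hH : H.IsHamiltonian) :
    ∃ W : (Q (m + 1)).Walk (inj b x) (inj b y), W.IsHamiltonian ∧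
      (∀ f ∈ P2.edges, Sym2.map (inj b) f ∈ W.edges) ∧
      (∀ f ∈ H.edges, Sym2.map (inj c) f ∈ W.edges) := by
  refine ⟨Walk.cons (adj_cross x hbc)
    ((H.map (homInj m c)).append (Walk.cons (adj_cross v1 (Ne.symm hbc)) (P2.map (homInj m b)))),
    ?_, ?_, ?_⟩
  · intro v
    rw [Walk.support_cons, Walk.support_append, Walk.support_cons, List.tail_cons]
    obtain ⟨d, u, rfl⟩ : ∃ d u, v = inj d u := ⟨_, _, eq_inj v⟩
    have hPc : ∀ w : V m, (Walk.cons h P2).support.count w = 1 := hP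
    have hsup : (Walk.cons h P2).support = x :: P2.support := Walk.support_cons _ _
    rw [List.count_cons, List.count_append]
    rcases eq_or_ne d b with rfl | hdb
    · rw [count_support_map_ne (Ne.symm hbc), count_support_map]
      rcases eq_or_ne u x with rfl | hux
      · have h1 : P2.support.count u = 0 := by
          have := hPc u
          rw [hsup, List.count_cons_self] at this
          omega
        simp [h1]
      · have h1 : P2.support.count u = 1 := by
          have := hPc u
          rw [hsup, List.count_cons_of_ne (by exact hux.symm)] at this
          exact this
        have h2 : inj d u ≠ inj d x := fun hc => hux (inj_injective d hc)
        simp [h1, h2, Ne.symm h2]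
    · have hdc : d = c := by cases b <;> cases c <;> cases d <;> simp_all
      subst hdc
      rw [count_support_map, count_support_map_ne hbc, hH u]
      simp [inj_ne_inj hbc x u]
  · intro f hf
    rw [Walk.edges_cons, Walk.edges_append, Walk.edges_cons]
    simp only [List.mem_cons, List.mem_append]
    right; right; right
    rw [Walk.edges_map]
    exact List.mem_map_of_mem hf
  · intro f hf
    rw [Walk.edges_cons, Walk.edges_append, Walk.edges_cons]
    simp only [List.mem_cons, List.mem_append]
    right; left
    rw [Walk.edges_map]
    exact List.mem_map_of_mem hf

lemma glueB {m : ℕ} {b c : Bool} (hbc : b ≠ c) {x w y0 : V m}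
    (P : (Q m).Walk x w) (hP : P.IsHamiltonian)
    (H : (Q m).Walk w y0) (hH : H.IsHamiltonian) :
    ∃ W : (Q (m + 1)).Walk (inj b x) (inj c y0), W.IsHamiltonian ∧
      (∀ f ∈ P.edges, Sym2.map (inj b) f ∈ W.edges) ∧
      (∀ f ∈ H.edges, Sym2.map (inj c) f ∈ W.edges) := by
  refine ⟨(P.map (homInj m b)).append
      (Walk.cons (adj_cross w hbc) (H.map (homInj m c))), ?_, ?_, ?_⟩
  · intro v
    rw [Walk.support_append, Walk.support_cons, List.tail_cons]
    obtain ⟨d, u, rfl⟩ : ∃ d u, v = inj d u := ⟨_, _, eq_inj v⟩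
    rw [List.count_append]
    rcases eq_or_ne d b with rfl | hdb
    · rw [count_support_map, count_support_map_ne (Ne.symm hbc), hP u]
    · have hdc : d = c := by cases b <;> cases c <;> cases d <;> simp_all
      subst hdc
      rw [count_support_map, count_support_map_ne hbc, hH u]
  · intro f hf
    rw [Walk.edges_append]
    simp only [List.mem_append]
    left
    rw [Walk.edges_map]
    exact List.mem_map_of_mem hf
  · intro f hf
    rw [Walk.edges_append, Walk.edges_cons]
    simp only [List.mem_append, List.mem_cons]
    right; right
    rw [Walk.edges_map]
    exact List.mem_map_of_mem hf



-- from f.lean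


/-- iso of Q n induced by permuting coordinates -/
def permIso {n : ℕ} (σ : Equiv.Perm (Fin n)) : Q n ≃g Q n where
  toEquiv := Equiv.arrowCongr σ (Equiv.refl Bool)
  map_rel_iff' := by
    intro u v
    constructor
    · rintro ⟨i, hi, hu⟩
      refine ⟨σ.symm i, by simpa [Equiv.arrowCongr] using hi, ?_⟩
      intro j hj
      have := hu (σ j) (by simpa [Equiv.arrowCongr] using hj)
      simpa using congrArg σ.symm this
    · rintro ⟨i, hi, hu⟩
      refine ⟨σ i, by simpa [Equiv.arrowCongr] using hi, ?_⟩
      intro j hj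
      simp only [Equiv.arrowCongr, Equiv.coe_fn_mk, Equiv.refl_apply] at hj
      have := hu (σ.symm j) hj
      simpa using congrArg σ this

lemma permIso_apply {n : ℕ} (σ : Equiv.Perm (Fin n)) (v : V n) (i : Fin n) :
    permIso σ v i = v (σ.symm i) := rfl

lemma permIso_par {n : ℕ} (σ : Equiv.Perm (Fin n)) (v : V n) :
    par (permIso σ v) = par v := by
  unfold par
  exact Fintype.sum_equiv σ.symm _ _ (fun i => rfl)

lemma permIso_flip {n : ℕ} (σ : Equiv.Perm (Fin n)) (j : Fin n) (v : V n) :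
    permIso σ (flip j v) = flip (σ j) (permIso σ v) := by
  funext i
  rcases eq_or_ne i (σ j) with rfl | hij
  · show flip j v (σ.symm (σ j)) = Function.update (permIso σ v) (σ j) (!(permIso σ v (σ j))) (σ j)
    rw [Function.update_self, Equiv.symm_apply_apply]
    show Function.update v j (!(v j)) j = !(permIso σ v (σ j))
    rw [Function.update_self, permIso_apply, Equiv.symm_apply_apply]
  · have : σ.symm i ≠ j := fun hc => hij (by simp [← hc])
    simp [permIso_apply, flip, Function.update_of_ne this, Function.update_of_ne hij]

lemma transfer {n : ℕ} (φ : Q n ≃g Q n) {x y : V n} {e : Sym2 (V n)}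
    (h : ∃ p : (Q n).Walk (φ x) (φ y), p.IsHamiltonian ∧ Sym2.map φ e ∈ p.edges) :
    ∃ p : (Q n).Walk x y, p.IsHamiltonian ∧ e ∈ p.edges := by
  obtain ⟨p, hp, he⟩ := h
  refine ⟨(p.map φ.symm.toHom).copy (by simp) (by simp), ?_, ?_⟩
  · intro v
    rw [Walk.support_copy]
    exact (hp.map φ.symm.toHom φ.symm.bijective) v
  · rw [Walk.edges_copy, Walk.edges_map]
    have : e = Sym2.map φ.symm.toHom (Sym2.map φ e) := by
      rw [Sym2.map_map]
      have hcomp : (φ.symm.toHom : V n → V n) ∘ (φ : V n → V n) = id := by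
        funext w
        simp
      rw [hcomp, Sym2.map_id]
      rfl
    rw [this]
    exact List.mem_map_of_mem he


-- from g.lean


lemma edge_char {n : ℕ} {e : Sym2 (V n)} (he : e ∈ (Q n).edgeSet) :
    ∃ a j, e = s(a, flip j a) := by
  induction e with
  | _ a b =>
    rw [SimpleGraph.mem_edgeSet] at he
    rcases adj_iff_flip.mp he with ⟨j, rfl⟩
    exact ⟨a, j, rfl⟩

lemma inj_flip {m : ℕ} (c : Bool) (j : Fin m) (v : V m) :
    inj c (flip j v) = flip j.castSucc (inj c v) := by
  funext i
  rcases Fin.eq_castSucc_or_eq_last i with ⟨i', rfl⟩ | rfl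
  · rcases eq_or_ne i' j with rfl | hij
    · rw [flip_apply_self]
      simp only [inj, Fin.snoc_castSucc]
      rw [flip_apply_self]
    · rw [flip_apply_ne _ _ _ (fun hc => hij (Fin.castSucc_injective _ hc))]
      simp only [inj, Fin.snoc_castSucc]
      rw [flip_apply_ne _ _ _ hij]
  · rw [flip_apply_ne _ _ _ (Fin.castSucc_lt_last j).ne']
    simp [inj]

lemma edge_in_copy {m : ℕ} (a : V (m + 1)) (j : Fin (m + 1)) (hj : j ≠ Fin.last m) :
    ∃ (c : Bool) (e₀ : Sym2 (V m)), e₀ ∈ (Q m).edgeSet ∧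
      s(a, flip j a) = Sym2.map (inj c) e₀ := by
  obtain ⟨j', rfl⟩ := Fin.exists_castSucc_eq.mpr hj
  refine ⟨a (Fin.last m), s(Fin.init a, flip j' (Fin.init a)), (adj_flip j' _), ?_⟩
  rw [Sym2.map_pair_eq, inj_flip]
  have ha : inj (a (Fin.last m)) (Fin.init a) = a := by
    simp [inj, Fin.snoc_init_self]
  rw [ha]


-- from h.lean


lemma flip_comm {n} {j k : Fin n} (h : j ≠ k) (v : V n) :
    flip j (flip k v) = flip k (flip j v) := by
  funext i
  rcases eq_or_ne i j with h' | hij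
  · subst h'
    rw [flip_apply_self, flip_apply_ne k i v h, flip_apply_ne k i _ h, flip_apply_self]
  · rcases eq_or_ne i k with h' | hik
    · subst h'
      rw [flip_apply_ne j i _ h.symm, flip_apply_self, flip_apply_self,
        flip_apply_ne j i _ h.symm]
    · rw [flip_apply_ne j i _ hij, flip_apply_ne k i _ hik,
        flip_apply_ne k i _ hik, flip_apply_ne j i _ hij]

lemma flip_ne_flip {n} {j k : Fin n} (h : j ≠ k) (v : V n) : flip j v ≠ flip k v := by
  intro hc
  have := congrFun hc j
  rw [flip_apply_self, flip_apply_ne k j v h] at this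
  exact (Bool.not_ne_self _) this

lemma ne_flip_flip {n} {j k : Fin n} (h : j ≠ k) (v : V n) : v ≠ flip j (flip k v) := by
  intro hc
  have := congrFun hc j
  rw [flip_apply_self, flip_apply_ne k j v h] at this
  exact (Bool.self_ne_not _) this

lemma fin2_cases {j k : Fin 2} (h : j ≠ k) (i : Fin 2) : i = j ∨ i = k := by
  have hj := j.isLt; have hk := k.isLt; have hi := i.isLt
  have hne : j.val ≠ k.val := fun hc => h (Fin.ext hc)
  have : i.val = j.val ∨ i.val = k.val := by omega
  rcases this with h1 | h1
  · left; exact Fin.ext h1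
  · right; exact Fin.ext h1

lemma universe2 {j k : Fin 2} (h : j ≠ k) (x v : V 2) :
    v = x ∨ v = flip j x ∨ v = flip k x ∨ v = flip j (flip k x) := by
  have hik : ∀ i : Fin 2, i = j ∨ i = k := fin2_cases h
  by_cases h1 : v j = x j <;> by_cases h2 : v k = x k
  · left
    funext i
    rcases hik i with h' | h' <;> (subst h'; assumption)
  · right; right; left
    funext i
    rcases hik i with h' | h'
    · subst h'
      rw [flip_apply_ne k i _ h, h1]
    · subst h'
      rw [flip_apply_self]
      exact Bool.eq_not_of_ne h2
  · right; left
    funext i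
    rcases hik i with h' | h'
    · subst h'
      rw [flip_apply_self]
      exact Bool.eq_not_of_ne h1
    · subst h'
      rw [flip_apply_ne j i _ h.symm, h2]
  · right; right; right
    funext i
    rcases hik i with h' | h'
    · subst h'
      rw [flip_apply_self, flip_apply_ne k i _ h]
      exact Bool.eq_not_of_ne h1
    · subst h'
      rw [flip_apply_ne j i _ h.symm, flip_apply_self]
      exact Bool.eq_not_of_ne h2


lemma base_aux {j k : Fin 2} (hjk : j ≠ k) (x : V 2) (e : Sym2 (V 2))
    (he : e ∈ (Q 2).edgeSet) (hne : e ≠ s(x, flip j x)) :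
    ∃ p : (Q 2).Walk x (flip j x), p.IsHamiltonian ∧ e ∈ p.edges := by
  have h3adj : (Q 2).Adj (flip j (flip k x)) (flip j x) := by
    have := adj_flip k (flip j (flip k x))
    rw [flip_comm hjk.symm, flip_flip] at this
    exact this
  refine ⟨Walk.cons (adj_flip k x) (Walk.cons (adj_flip j (flip k x))
    (Walk.cons h3adj Walk.nil)), ?_, ?_⟩
  · -- distinctness facts
    have d1 : x ≠ flip k x := (flip_ne k x).symm
    have d2 : x ≠ flip j (flip k x) := ne_flip_flip hjk x
    have d3 : x ≠ flip j x := (flip_ne j x).symm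
    have d4 : flip k x ≠ flip j (flip k x) := (flip_ne j (flip k x)).symm
    have d5 : flip k x ≠ flip j x := (flip_ne_flip hjk.symm x)
    have d6 : flip j (flip k x) ≠ flip j x := by
      intro hc
      have := congrFun hc k
      rw [flip_apply_ne j k _ hjk.symm, flip_apply_self, flip_apply_ne j k _ hjk.symm] at this
      exact Bool.not_ne_self _ this
    intro v
    rcases universe2 hjk x v with rfl | rfl | rfl | rfl <;>
      simp [Walk.support_cons, List.count_cons, d1, d2, d3, d4, d5, d6,
        d1.symm, d2.symm, d3.symm, d4.symm, d5.symm, d6.symm]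
  · obtain ⟨a, i, rfl⟩ := edge_char he
    simp only [Walk.edges_cons, Walk.edges_nil, List.mem_cons, List.not_mem_nil, or_false]
    rcases fin2_cases hjk i with h' | h' <;> subst h' <;>
      rcases universe2 hjk x a with h' | h' | h' | h' <;> subst h'
    · exact absurd rfl hne
    · exact absurd (by rw [flip_flip]; exact Sym2.eq_swap) hne
    · right; left; rfl
    · right; left
      rw [flip_flip]
      exact Sym2.eq_swap
    · left; rfl
    · right; right
      rw [flip_comm hjk.symm]
      exact Sym2.eq_swap
    · left
      rw [flip_flip]
      exact Sym2.eq_swap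
    · right; right
      rw [flip_comm hjk.symm, flip_flip]

lemma hamE_two : HamE 2 := by
  intro x y hpar e he hne
  have h01 : (0 : Fin 2) ≠ 1 := by decide
  rcases universe2 h01 x y with h' | h' | h' | h'
  · exact absurd (congrArg par h'.symm) hpar
  · subst h'; exact base_aux h01 x e he hne
  · subst h'; exact base_aux h01.symm x e he hne
  · subst h'
    exfalso
    apply hpar
    rw [par_flip, par_flip, add_assoc, show (1:ZMod 2)+1 = 0 by decide, add_zero]


-- from j.lean


lemma par_ne_of_adj {n} {x y : V n} (h : (Q n).Adj x y) : par x ≠ par y := by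
  rw [par_adj h]
  intro hc
  nth_rewrite 1 [show par x = par x + 0 by rw [add_zero]] at hc
  exact one_ne_zero (add_left_cancel hc).symm

lemma ham_of_hamE {m : ℕ} (hm : 2 ≤ m) (h : HamE m) :
    ∀ x y : V m, par x ≠ par y → ∃ p : (Q m).Walk x y, p.IsHamiltonian := by
  intro x y hpar
  obtain ⟨m', rfl⟩ : ∃ m', m = m' + 2 := ⟨m - 2, by omega⟩
  set i0 : Fin (m' + 2) := ⟨0, by omega⟩
  set i1 : Fin (m' + 2) := ⟨1, by omega⟩
  have hi : i0 ≠ i1 := by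
    intro hc
    have := congrArg Fin.val hc
    simp [i0, i1] at this
  have hedge : ∀ j : Fin (m' + 2), s(x, flip j x) ∈ (Q (m' + 2)).edgeSet :=
    fun j => (Q (m' + 2)).mem_edgeSet.mpr (adj_flip j x)
  rcases eq_or_ne (s(x, flip i0 x) : Sym2 (V (m' + 2))) s(x, y) with h0 | h0
  · -- use the other edge
    have h1 : (s(x, flip i1 x) : Sym2 (V (m' + 2))) ≠ s(x, y) := by
      intro h1
      rw [← h0] at h1
      rcases Sym2.eq_iff.mp h1 with ⟨-, h2⟩ | ⟨h2, h3⟩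
      · exact flip_ne_flip hi.symm x h2
      · exact flip_ne i1 x h3
    obtain ⟨p, hp, -⟩ := h x y hpar _ (hedge i1) h1
    exact ⟨p, hp⟩
  · obtain ⟨p, hp, -⟩ := h x y hpar _ (hedge i0) h0
    exact ⟨p, hp⟩

lemma card_V (m : ℕ) : Fintype.card (V m) = 2 ^ m := by
  simp [Fintype.card_fun]

lemma bool_ind (b : Bool) : (if (!b) then (1 : ZMod 2) else 0) = (if b then 1 else 0) + 1 := by
  cases b <;> decide

lemma pick_w {m : ℕ} (hm : 2 ≤ m) (x₀ : V m) (e₀ : Sym2 (V m)) :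
    ∃ w, (Q m).Adj x₀ w ∧ e₀ ≠ s(x₀, w) := by
  obtain ⟨m', rfl⟩ : ∃ m', m = m' + 2 := ⟨m - 2, by omega⟩
  set i0 : Fin (m' + 2) := ⟨0, by omega⟩
  set i1 : Fin (m' + 2) := ⟨1, by omega⟩
  have hi : i0 ≠ i1 := by
    intro hc
    have := congrArg Fin.val hc
    simp [i0, i1] at this
  rcases eq_or_ne e₀ s(x₀, flip i0 x₀) with rfl | h0
  · refine ⟨flip i1 x₀, adj_flip i1 x₀, ?_⟩
    intro hc
    rcases Sym2.eq_iff.mp hc with ⟨-, h2⟩ | ⟨h2, h3⟩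
    · exact flip_ne_flip hi x₀ h2
    · exact flip_ne i0 x₀ h3
  · exact ⟨flip i0 x₀, adj_flip i0 x₀, h0⟩

lemma dodge {m : ℕ} (hm : 2 ≤ m) {x₀ y₀ : V m} {P : (Q m).Walk x₀ y₀}
    (hP : P.IsHamiltonian) (hxy : x₀ ≠ y₀) (e₀ : Sym2 (V m)) :
    (∃ (v1 : V m) (h : (Q m).Adj x₀ v1) (P2 : (Q m).Walk v1 y₀),
      (Walk.cons h P2).IsHamiltonian ∧ e₀ ≠ s(x₀, v1) ∧ (e₀ ∈ P.edges → e₀ ∈ P2.edges)) ∨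
    (∃ (v1 : V m) (h : (Q m).Adj y₀ v1) (P2 : (Q m).Walk v1 x₀),
      (Walk.cons h P2).IsHamiltonian ∧ e₀ ≠ s(y₀, v1) ∧ (e₀ ∈ P.edges → e₀ ∈ P2.edges)) := by
  obtain ⟨v1, h1, P2, hdec⟩ := cons_decomp P hxy
  obtain ⟨v1', h1', P2', hdec'⟩ := cons_decomp P.reverse hxy.symm
  have hRham : P.reverse.IsHamiltonian := reverse_ham hP
  have hedges : P.edges = s(x₀, v1) :: P2.edges := by rw [hdec, Walk.edges_cons]
  have hedges' : P.reverse.edges = s(y₀, v1') :: P2'.edges := by rw [hdec', Walk.edges_cons]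
  have hnd : P.edges.Nodup := hP.isPath.isTrail.edges_nodup
  have hlen : P.length = 2 ^ m - 1 := by
    rw [hP.length_eq, card_V]
  have hP2len : P2.length = 2 ^ m - 2 := by
    have h4 : 4 ≤ 2 ^ m := by
      calc (4:ℕ) = 2 ^ 2 := by norm_num
      _ ≤ 2 ^ m := Nat.pow_le_pow_right (by norm_num) hm
    have : P.length = P2.length + 1 := by rw [hdec, Walk.length_cons]
    omega
  have hP2ne : P2.edges ≠ [] := by
    have h4 : 4 ≤ 2 ^ m := by
      calc (4:ℕ) = 2 ^ 2 := by norm_num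
      _ ≤ 2 ^ m := Nat.pow_le_pow_right (by norm_num) hm
    intro hc
    have := Walk.length_edges P2
    rw [hc] at this
    simp at this
    omega
  have hff : s(x₀, v1) ≠ s(y₀, v1') := by
    apply head_ne_of_reverse (l := P2.edges) (l' := P2'.edges)
    · rw [← hedges]; exact hnd
    · exact hP2ne
    · rw [← hedges, ← Walk.edges_reverse, hedges']
  rcases eq_or_ne e₀ s(x₀, v1) with heq | hne1
  · right
    refine ⟨v1', h1', P2', by rw [← hdec']; exact hRham,
      fun hc => hff (heq.symm.trans hc), ?_⟩
    intro hmem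
    have : e₀ ∈ P.reverse.edges := by
      rw [Walk.edges_reverse]
      exact List.mem_reverse.mpr hmem
    rw [hedges'] at this
    rcases List.mem_cons.mp this with hc | hc
    · exact absurd (heq.symm.trans hc) hff
    · exact hc
  · left
    refine ⟨v1, h1, P2, by rw [← hdec]; exact hP, hne1, ?_⟩
    intro hmem
    rw [hedges] at hmem
    rcases List.mem_cons.mp hmem with hc | hc
    · exact absurd hc hne1
    · exact hc

section
variable {m : ℕ}

lemma caseA1 (hamm : ∀ x y : V m, par x ≠ par y → ∃ p : (Q m).Walk x y, p.IsHamiltonian)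
    {s : Bool} {x₀ v1 y₀ : V m} {e₀ : Sym2 (V m)}
    (h : (Q m).Adj x₀ v1) (P2 : (Q m).Walk v1 y₀)
    (hP : (Walk.cons h P2).IsHamiltonian) (he₀ : e₀ ∈ P2.edges) :
    ∃ W : (Q (m + 1)).Walk (inj s x₀) (inj s y₀), W.IsHamiltonian ∧
      Sym2.map (inj s) e₀ ∈ W.edges := by
  obtain ⟨H, hH⟩ := hamm x₀ v1 (par_ne_of_adj h)
  obtain ⟨W, hW, hc1, -⟩ := glue (b := s) (c := !s) (Bool.self_ne_not s) h P2 hP H hH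
  exact ⟨W, hW, hc1 e₀ he₀⟩

lemma caseA2 (IH : HamE m) {s c : Bool} (hcs : s ≠ c) {x₀ v1 y₀ : V m} {e₀ : Sym2 (V m)}
    (he : e₀ ∈ (Q m).edgeSet) (h : (Q m).Adj x₀ v1) (P2 : (Q m).Walk v1 y₀)
    (hP : (Walk.cons h P2).IsHamiltonian) (hne : e₀ ≠ s(x₀, v1)) :
    ∃ W : (Q (m + 1)).Walk (inj s x₀) (inj s y₀), W.IsHamiltonian ∧
      Sym2.map (inj c) e₀ ∈ W.edges := by
  obtain ⟨H, hH, heH⟩ := IH x₀ v1 (par_ne_of_adj h) e₀ he hne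
  obtain ⟨W, hW, -, hc2⟩ := glue (b := s) (c := c) hcs h P2 hP H hH
  exact ⟨W, hW, hc2 e₀ heH⟩

lemma caseB (hm : 2 ≤ m) (IH : HamE m)
    (hamm : ∀ x y : V m, par x ≠ par y → ∃ p : (Q m).Walk x y, p.IsHamiltonian)
    {c d : Bool} (hcd : c ≠ d) {x₀ y₀ : V m} {e₀ : Sym2 (V m)}
    (he : e₀ ∈ (Q m).edgeSet) (hpar : par x₀ ≠ par y₀ + 1) :
    ∃ W : (Q (m + 1)).Walk (inj c x₀) (inj d y₀), W.IsHamiltonian ∧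
      Sym2.map (inj c) e₀ ∈ W.edges := by
  obtain ⟨w, hadjw, hnew⟩ := pick_w hm x₀ e₀
  obtain ⟨P, hPham, hPe⟩ := IH x₀ w (par_ne_of_adj hadjw) e₀ he hnew
  have hparw : par w ≠ par y₀ := by
    rw [par_adj hadjw]
    exact zmod2_ne_add_one hpar
  obtain ⟨H, hH⟩ := hamm w y₀ hparw
  obtain ⟨W, hW, hc1, -⟩ := glueB hcd P hPham H hH
  exact ⟨W, hW, hc1 e₀ hPe⟩

end
lemma zmod2_swap {a b : ZMod 2} (h : a + 1 ≠ b) : a ≠ b + 1 := by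
  intro hc
  apply h
  rw [hc, add_assoc, show (1:ZMod 2)+1 = 0 by decide, add_zero]

lemma step_core {m : ℕ} (hm : 2 ≤ m) (IH : HamE m) {x y : V (m + 1)}
    (hpar : par x ≠ par y) {c : Bool} {e₀ : Sym2 (V m)} (he₀ : e₀ ∈ (Q m).edgeSet)
    (hne : Sym2.map (inj c) e₀ ≠ s(x, y)) :
    ∃ p : (Q (m + 1)).Walk x y, p.IsHamiltonian ∧ Sym2.map (inj c) e₀ ∈ p.edges := by
  have hamm := ham_of_hamE hm IH
  obtain ⟨dx, x₀, rfl⟩ : ∃ d u, x = inj d u := ⟨_, _, eq_inj x⟩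
  obtain ⟨dy, y₀, rfl⟩ : ∃ d u, y = inj d u := ⟨_, _, eq_inj y⟩
  rw [par_inj, par_inj] at hpar
  rcases eq_or_ne dx dy with heq | hnexy
  · subst heq
    have hpar0 : par x₀ ≠ par y₀ := fun hc => hpar (by rw [hc])
    have hx0y0 : x₀ ≠ y₀ := fun hc => hpar0 (congrArg par hc)
    by_cases hcs : c = dx
    · subst hcs
      have hne₀ : e₀ ≠ s(x₀, y₀) := fun hc => hne (by rw [hc, Sym2.map_pair_eq])
      obtain ⟨P, hPham, hPe⟩ := IH x₀ y₀ hpar0 e₀ he₀ hne₀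
      rcases dodge hm hPham hx0y0 e₀ with ⟨v1, h1, P2, hh, hne1, hmem⟩ |
        ⟨v1, h1, P2, hh, hne1, hmem⟩
      · exact caseA1 (s := c) hamm h1 P2 hh (hmem hPe)
      · obtain ⟨W, hW, hWe⟩ := caseA1 (s := c) hamm h1 P2 hh (hmem hPe)
        exact ⟨W.reverse, reverse_ham hW,
          by rw [Walk.edges_reverse]; exact List.mem_reverse.mpr hWe⟩
    · obtain ⟨P, hPham⟩ := hamm x₀ y₀ hpar0
      rcases dodge hm hPham hx0y0 e₀ with ⟨v1, h1, P2, hh, hne1, -⟩ |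
        ⟨v1, h1, P2, hh, hne1, -⟩
      · exact caseA2 IH (fun h' => hcs h'.symm) he₀ h1 P2 hh hne1
      · obtain ⟨W, hW, hWe⟩ := caseA2 (s := dx) (c := c) IH (fun h' => hcs h'.symm)
          he₀ h1 P2 hh hne1
        exact ⟨W.reverse, reverse_ham hW,
          by rw [Walk.edges_reverse]; exact List.mem_reverse.mpr hWe⟩
  · have hdy : dy = !dx := by cases dx <;> cases dy <;> simp_all
    by_cases hcx : c = dx
    · subst hcx
      have hparB : par x₀ ≠ par y₀ + 1 := by
        intro hc
        apply hpar
        rw [hc, hdy, bool_ind]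
        ring
      obtain ⟨W, hW, hWe⟩ := caseB hm IH hamm hnexy he₀ hparB
      exact ⟨W, hW, hWe⟩
    · have hcy : c = dy := by cases c <;> cases dx <;> cases dy <;> first | rfl | simp_all
      subst hcy
      have hparB : par y₀ ≠ par x₀ + 1 := by
        apply zmod2_swap
        intro hc
        apply hpar
        rw [← hc, hdy, bool_ind]
        ring
      obtain ⟨W, hW, hWe⟩ := caseB hm IH hamm (Ne.symm hnexy) he₀ hparB
      exact ⟨W.reverse, reverse_ham hW,
        by rw [Walk.edges_reverse]; exact List.mem_reverse.mpr hWe⟩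
lemma step {m : ℕ} (hm : 2 ≤ m) (IH : HamE m) : HamE (m + 1) := by
  intro x y hpar e he hne
  obtain ⟨a, j, rfl⟩ := edge_char he
  rcases eq_or_ne j (Fin.last m) with hj | hj
  · set i0 : Fin (m + 1) := ⟨0, by omega⟩ with hi0
    set σ : Equiv.Perm (Fin (m + 1)) := Equiv.swap (Fin.last m) i0 with hσ
    apply transfer (permIso σ)
    have him : Sym2.map (permIso σ) s(a, flip j a)
        = s(permIso σ a, flip (σ j) (permIso σ a)) := by
      rw [Sym2.map_pair_eq, permIso_flip]
    rw [him]
    have hσj : σ j ≠ Fin.last m := by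
      rw [hj, hσ, Equiv.swap_apply_left]
      intro hc
      have := congrArg Fin.val hc
      simp [hi0, Fin.last] at this
      omega
    obtain ⟨c, e₀, he₀, heq⟩ := edge_in_copy (permIso σ a) (σ j) hσj
    rw [heq]
    apply step_core hm IH
    · rw [permIso_par, permIso_par]
      exact hpar
    · exact he₀
    · rw [← heq, ← him]
      intro hc
      apply hne
      have : s((permIso σ) x, (permIso σ) y) = Sym2.map (permIso σ) s(x, y) := by
        rw [Sym2.map_pair_eq]
      rw [this] at hc
      exact Sym2.map.injective (permIso σ).toEquiv.injective hc
  · obtain ⟨c, e₀, he₀, heq⟩ := edge_in_copy a j hj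
    rw [heq]
    exact step_core hm IH hpar he₀ (heq ▸ hne)

lemma hamE_all : ∀ m, 2 ≤ m → HamE m := by
  intro m hm
  induction m, hm using Nat.le_induction with
  | base => exact hamE_two
  | succ n hn ih => exact step hn ih


end HQ

theorem stmt_3 (n : ℕ) (hn : 2 ≤ n) (x y : Fin n → Bool)
    (h : Odd ((Q n).dist x y)) (e : Sym2 (Fin n → Bool))
    (he : e ∈ (Q n).edgeSet) (hne : e ≠ s(x, y)) :
    ∃ p : (Q n).Walk x y, p.IsHamiltonian ∧ e ∈ p.edges := by
  exact HQ.hamE_all n hn x y (HQ.par_ne_of_odd_dist h) e he hne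
end

section
/- For n ≥ 3, let F be a set of at most n − 2 edges of Q_n. Then every edge of Q_n not in F lies on some Hamiltonian cycle of Q_n − F. -/
open Finset

/-- Generalized hypercube graph on `V → Bool`. -/
def HG (V : Type) : SimpleGraph (V → Bool) where
  Adj x y := ∃! i, x i ≠ y i
  symm := by
    constructor
    rintro x y ⟨i, hi, hu⟩
    exact ⟨i, hi.symm, fun j hj => hu j hj.symm⟩
  loopless := by
    constructor
    rintro x ⟨i, hi, -⟩
    exact hi rfl

section Aux
variable {V : Type} [DecidableEq V] [Fintype V]

/-- Number of differing coordinates. -/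
def nd (x y : V → Bool) : ℕ := (univ.filter fun i => x i ≠ y i).card

def s2 (x : V → Bool) : ZMod 2 := ∑ i, if x i then 1 else 0

lemma nd_cast (x y : V → Bool) : ((nd x y : ℕ) : ZMod 2) = s2 x + s2 y := by
  rw [nd, card_filter]
  push_cast
  rw [s2, s2, ← Finset.sum_add_distrib]
  refine Finset.sum_congr rfl fun i _ => ?_
  cases hx : x i <;> cases hy : y i <;> simp [hx, hy] <;> decide

lemma odd_iff_cast {n : ℕ} : Odd n ↔ ((n : ℕ) : ZMod 2) = 1 := by
  have h : ((n : ℕ) : ZMod 2) = ((n % 2 : ℕ) : ZMod 2) := (ZMod.natCast_mod n 2).symm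
  rcases Nat.mod_two_eq_zero_or_one n with h2 | h2 <;>
    simp [Nat.odd_iff, h, h2] <;> decide

lemma even_iff_cast {n : ℕ} : ¬ Odd n ↔ ((n : ℕ) : ZMod 2) = 0 := by
  have h : ((n : ℕ) : ZMod 2) = ((n % 2 : ℕ) : ZMod 2) := (ZMod.natCast_mod n 2).symm
  rcases Nat.mod_two_eq_zero_or_one n with h2 | h2 <;>
    simp [Nat.odd_iff, h, h2] <;> decide

lemma adj_iff_nd {x y : V → Bool} : (HG V).Adj x y ↔ nd x y = 1 := by
  constructor
  · rintro ⟨j, hj, hju⟩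
    rw [nd, Finset.card_eq_one]
    exact ⟨j, by
      ext i
      simp only [mem_filter, mem_univ, true_and, mem_singleton]
      exact ⟨fun h => hju i h, fun h => h ▸ hj⟩⟩
  · intro h
    rw [nd, Finset.card_eq_one] at h
    obtain ⟨j, hj⟩ := h
    have hmem : ∀ i, (x i ≠ y i) ↔ i = j := by
      intro i
      constructor
      · intro hi
        have : i ∈ univ.filter fun i => x i ≠ y i := by simp [hi]
        rw [hj] at this; simpa using this
      · intro hi
        have : j ∈ ({j} : Finset V) := by simp
        rw [← hj] at this; simp only [mem_filter] at this
        exact hi ▸ this.2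
    exact ⟨j, (hmem j).mpr rfl, fun i hi => (hmem i).mp hi⟩

variable (d : V)

/-- Extend a function on `{i // i ≠ d}` to `V` by assigning `b` at `d`. -/
def extd (b : Bool) (x : {i : V // i ≠ d} → Bool) : V → Bool :=
  fun i => if h : i = d then b else x ⟨i, h⟩

def resd (x : V → Bool) : {i : V // i ≠ d} → Bool := fun i => x i.1

@[simp] lemma extd_apply_d (b : Bool) (x : {i : V // i ≠ d} → Bool) : extd d b x d = b :=
  dif_pos rfl

lemma extd_apply_ne (b : Bool) (x : {i : V // i ≠ d} → Bool) {i : V} (h : i ≠ d) :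
    extd d b x i = x ⟨i, h⟩ := dif_neg h

@[simp] lemma resd_extd (b : Bool) (x : {i : V // i ≠ d} → Bool) : resd d (extd d b x) = x := by
  funext i
  rw [resd, extd_apply_ne d b x i.2]

lemma extd_resd {b : Bool} {x : V → Bool} (h : x d = b) : extd d b (resd d x) = x := by
  funext i
  by_cases hi : i = d
  · subst hi; simp [h]
  · rw [extd_apply_ne d b _ hi]; rfl

lemma extd_inj (b : Bool) : Function.Injective (extd d b) := by
  intro x y h
  have := congrArg (resd d) h
  simpa using this

lemma adj_extd_iff (b : Bool) {x y : {i : V // i ≠ d} → Bool} :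
    (HG V).Adj (extd d b x) (extd d b y) ↔ (HG {i : V // i ≠ d}).Adj x y := by
  constructor
  · rintro ⟨i, hi, hiu⟩
    have hid : i ≠ d := by
      intro h; subst h; simp at hi
    refine ⟨⟨i, hid⟩, ?_, ?_⟩
    · rwa [extd_apply_ne d b x hid, extd_apply_ne d b y hid] at hi
    · intro j hj
      have : extd d b x j.1 ≠ extd d b y j.1 := by
        rw [extd_apply_ne d b x j.2, extd_apply_ne d b y j.2]
        exact hj
      have := hiu j.1 this
      exact Subtype.ext this
  · rintro ⟨j, hj, hju⟩
    refine ⟨j.1, ?_, ?_⟩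
    · show extd d b x j.1 ≠ extd d b y j.1
      rw [extd_apply_ne d b x j.2, extd_apply_ne d b y j.2]
      exact hj
    · intro i hi
      have hid : i ≠ d := by
        intro h; subst h; simp at hi
      rw [extd_apply_ne d b x hid, extd_apply_ne d b y hid] at hi
      exact congrArg Subtype.val (hju ⟨i, hid⟩ hi)

lemma adj_cross {b b' : Bool} (hbb : b ≠ b') (x : {i : V // i ≠ d} → Bool) :
    (HG V).Adj (extd d b x) (extd d b' x) := by
  refine ⟨d, by simpa using hbb, ?_⟩
  intro i hi
  by_contra hid
  rw [extd_apply_ne d b x hid, extd_apply_ne d b' x hid] at hi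
  exact hi rfl

/-- The graph homomorphism from the subcube into the cube. -/
@[reducible] def extHom (b : Bool) : HG {i : V // i ≠ d} →g HG V where
  toFun := extd d b
  map_rel' := fun {x y} h => (adj_extd_iff d b).mpr h

@[simp] lemma extHom_coe (b : Bool) : ⇑(extHom d b) = extd d b := rfl

lemma nd_extd (b b' : Bool) (x y : {i : V // i ≠ d} → Bool) :
    nd (extd d b x) (extd d b' y) = nd x y + (if b = b' then 0 else 1) := by
  rw [nd, nd, card_filter, card_filter]
  have hsplit := Finset.sum_compl_add_sum ({d} : Finset V)
    (fun i => if extd d b x i ≠ extd d b' y i then 1 else 0)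
  rw [← hsplit, Finset.sum_singleton]
  congr 1
  · rw [Finset.sum_subtype ({d}ᶜ : Finset V)
      (p := fun i => i ≠ d) (by intro i; simp)
      (fun i => if extd d b x i ≠ extd d b' y i then 1 else 0)]
    refine Finset.sum_congr rfl fun i _ => ?_
    rw [extd_apply_ne d b x i.2, extd_apply_ne d b' y i.2]
  · simp only [extd_apply_d]
    by_cases h : b = b' <;> simp [h]

lemma card_odd_filter (hV : 1 ≤ Fintype.card V) (u : V → Bool) :
    (univ.filter fun w : V → Bool => Odd (nd u w)).card = 2 ^ (Fintype.card V - 1) := by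
  obtain ⟨i₀⟩ : Nonempty V := Fintype.card_pos_iff.mp hV
  set O := univ.filter fun w : V → Bool => Odd (nd u w) with hO
  set E := univ.filter fun w : V → Bool => ¬ Odd (nd u w) with hE
  have hs2flip : ∀ w : V → Bool, s2 (Function.update w i₀ (!w i₀)) = s2 w + 1 := by
    intro w
    have hfun : (fun i => (if Function.update w i₀ (!w i₀) i then (1 : ZMod 2) else 0)) =
        Function.update (fun i => if w i then (1 : ZMod 2) else 0) i₀ (if !w i₀ then 1 else 0) := by
      funext j
      by_cases hj : j = i₀
      · subst hj; simp
      · simp [Function.update_of_ne hj]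
    rw [s2, hfun, Finset.sum_update_of_mem (Finset.mem_univ i₀)]
    rw [s2, ← Finset.add_sum_erase univ _ (Finset.mem_univ i₀)]
    have : (univ : Finset V) \ {i₀} = univ.erase i₀ := by
      ext; simp [Finset.mem_erase, and_comm]
    rw [this, add_right_comm]
    congr 1
    cases hw : w i₀ <;> simp <;> decide
  have hflip : ∀ w : V → Bool, Odd (nd u (Function.update w i₀ (!w i₀))) ↔ ¬ Odd (nd u w) := by
    intro w
    rw [odd_iff_cast, even_iff_cast, nd_cast, nd_cast, hs2flip]
    have : ∀ z : ZMod 2, z + 1 = 1 ↔ z = 0 := by decide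
    rw [← add_assoc, this]
  have hmaps : ∀ w ∈ O, Function.update w i₀ (!w i₀) ∈ E := by
    intro w hw
    simp only [hO, mem_filter, mem_univ, true_and] at hw
    simp only [hE, mem_filter, mem_univ, true_and, hflip]
    simpa using hw
  have hmaps' : ∀ w ∈ E, Function.update w i₀ (!w i₀) ∈ O := by
    intro w hw
    simp only [hE, mem_filter, mem_univ, true_and] at hw
    simp only [hO, mem_filter, mem_univ, true_and, hflip]
    exact hw
  have hinv : ∀ w : V → Bool, Function.update (Function.update w i₀ (!w i₀)) i₀
      (!(Function.update w i₀ (!w i₀)) i₀) = w := by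
    intro w
    funext j
    by_cases hj : j = i₀
    · subst hj; simp
    · simp [Function.update_of_ne hj]
  have hcardOE : O.card = E.card := by
    refine Finset.card_bij' (fun w _ => Function.update w i₀ (!w i₀))
      (fun w _ => Function.update w i₀ (!w i₀)) hmaps hmaps' ?_ ?_
    · intro w _; exact hinv w
    · intro w _; exact hinv w
  have htot : O.card + E.card = 2 ^ Fintype.card V := by
    rw [hO, hE, Finset.card_filter_add_card_filter_not, Finset.card_univ,
      Fintype.card_fun, Fintype.card_bool]
  have h2 : 2 ^ Fintype.card V = 2 * 2 ^ (Fintype.card V - 1) := by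
    conv_lhs => rw [show Fintype.card V = (Fintype.card V - 1) + 1 by omega]
    ring
  omega

end Aux
open Finset SimpleGraph

lemma split_good {α : Type} [DecidableEq α] {G : SimpleGraph α} :
    ∀ (n : ℕ) {u v : α} (p : G.Walk u v), p.length = n → p.IsPath →
    ∀ (W : Finset α), 2 * W.card < p.length →
    ∃ (a b : α) (hab : G.Adj a b) (q1 : G.Walk u a) (q2 : G.Walk b v),
      p = q1.append (SimpleGraph.Walk.cons hab q2) ∧ a ∉ W ∧ b ∉ W := by
  intro n
  induction n using Nat.strong_induction_on with
  | _ n ih =>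
    intro u v p hn hp W hW
    cases p with
    | nil => simp at hW
    | @cons _ c _ h p' =>
      by_cases hu : u ∈ W
      · -- recurse on p' with W.erase u
        have hlen : p'.length < n := by
          simp only [Walk.length_cons] at hn; omega
        have hbound : 2 * (W.erase u).card < p'.length := by
          rw [Finset.card_erase_of_mem hu]
          simp only [Walk.length_cons] at hW
          have : 1 ≤ W.card := Finset.card_pos.mpr ⟨u, hu⟩
          omega
        obtain ⟨a, b, hab, q1, q2, heq, ha, hb⟩ :=
          ih p'.length hlen p' rfl hp.of_cons (W.erase u) hbound
        have haS : a ∈ p'.support := by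
          rw [heq]
          exact Walk.subset_support_append_left _ _ (Walk.end_mem_support q1)
        have hbS : b ∈ p'.support := by
          rw [heq, Walk.support_append]
          refine List.mem_append_right _ ?_
          simpa using Walk.start_mem_support q2
        have huS : u ∉ p'.support := by
          have := hp.support_nodup
          simp only [Walk.support_cons, List.nodup_cons] at this
          exact this.1
        refine ⟨a, b, hab, Walk.cons h q1, q2, ?_, ?_, ?_⟩
        · rw [Walk.cons_append, heq]
        · intro haW
          exact ha (Finset.mem_erase.mpr ⟨fun he => huS (he ▸ haS), haW⟩)
        · intro hbW
          exact hb (Finset.mem_erase.mpr ⟨fun he => huS (he ▸ hbS), hbW⟩)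
      · by_cases hc : c ∈ W
        · cases p' with
          | nil =>
            exfalso
            simp only [Walk.length_cons, Walk.length_nil] at hW
            have : W.card = 0 := by omega
            rw [Finset.card_eq_zero] at this
            rw [this] at hc
            simp at hc
          | @cons _ c₂ _ h' p'' =>
            have hlen : p''.length < n := by
              simp only [Walk.length_cons] at hn; omega
            have hbound : 2 * (W.erase c).card < p''.length := by
              rw [Finset.card_erase_of_mem hc]
              simp only [Walk.length_cons] at hW
              have : 1 ≤ W.card := Finset.card_pos.mpr ⟨c, hc⟩
              omega
            obtain ⟨a, b, hab, q1, q2, heq, ha, hb⟩ :=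
              ih p''.length hlen p'' rfl hp.of_cons.of_cons (W.erase c) hbound
            have haS : a ∈ p''.support := by
              rw [heq]
              exact Walk.subset_support_append_left _ _ (Walk.end_mem_support q1)
            have hbS : b ∈ p''.support := by
              rw [heq, Walk.support_append]
              refine List.mem_append_right _ ?_
              simpa using Walk.start_mem_support q2
            have hcS : c ∉ p''.support := by
              have := hp.of_cons.support_nodup
              simp only [Walk.support_cons, List.nodup_cons] at this
              exact this.1
            refine ⟨a, b, hab, Walk.cons h (Walk.cons h' q1), q2, ?_, ?_, ?_⟩
            · rw [Walk.cons_append, Walk.cons_append, heq]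
            · intro haW
              exact ha (Finset.mem_erase.mpr ⟨fun he => hcS (he ▸ haS), haW⟩)
            · intro hbW
              exact hb (Finset.mem_erase.mpr ⟨fun he => hcS (he ▸ hbS), hbW⟩)
        · exact ⟨u, c, h, Walk.nil, p', rfl, hu, hc⟩
open Finset SimpleGraph

section Aux2
variable {V : Type} [DecidableEq V] [Fintype V]

/-- Faulty edges inside the `b`-subcube, pulled back to the subcube. -/
def Fsub (d : V) (F : Finset (Sym2 (V → Bool))) (b : Bool) :
    Finset (Sym2 ({i : V // i ≠ d} → Bool)) :=
  univ.filter (fun s => s.map (extd d b) ∈ F)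

lemma mem_Fsub {d : V} {F : Finset (Sym2 (V → Bool))} {b : Bool}
    {s : Sym2 ({i : V // i ≠ d} → Bool)} : s ∈ Fsub d F b ↔ s.map (extd d b) ∈ F := by
  simp [Fsub]

/-- Subcube vertices whose crossing edge is faulty. -/
def Wcross (d : V) (F : Finset (Sym2 (V → Bool))) : Finset ({i : V // i ≠ d} → Bool) :=
  univ.filter (fun w => s(extd d false w, extd d true w) ∈ F)

lemma mem_Wcross {d : V} {F : Finset (Sym2 (V → Bool))} {w : {i : V // i ≠ d} → Bool} :
    w ∈ Wcross d F ↔ s(extd d false w, extd d true w) ∈ F := by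
  simp [Wcross]

lemma Wcross_card (d : V) (F : Finset (Sym2 (V → Bool))) : (Wcross d F).card ≤ F.card := by
  refine Finset.card_le_card_of_injOn (fun w => s(extd d false w, extd d true w)) ?_ ?_
  · intro w hw
    exact mem_Wcross.mp hw
  · intro w _ w' _ h
    rw [Sym2.eq_iff] at h
    rcases h with ⟨h1, _⟩ | ⟨h1, _⟩
    · exact extd_inj d false h1
    · exfalso
      have := congrFun h1 d
      simp at this

lemma Fsub_edgeSet {d : V} {F : Finset (Sym2 (V → Bool))}
    (hFE : ↑F ⊆ (HG V).edgeSet) (b : Bool) :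
    ↑(Fsub d F b) ⊆ (HG {i : V // i ≠ d}).edgeSet := by
  intro s hs
  have hsF : Sym2.map (extd d b) s ∈ F := mem_Fsub.mp hs
  have hedge := hFE hsF
  induction s using Sym2.ind with
  | _ p q =>
    rw [Sym2.map_pair_eq] at hedge
    rw [SimpleGraph.mem_edgeSet] at hedge ⊢
    exact (adj_extd_iff d b).mp hedge

lemma exists_dim [Nonempty V] (F : Finset (Sym2 (V → Bool))) (hFE : ↑F ⊆ (HG V).edgeSet) :
    ∃ d : V, ∀ b : Bool, (Fsub d F b).card ≤ F.card - 1 := by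
  rcases F.eq_empty_or_nonempty with hFe | ⟨f, hf⟩
  · refine ⟨Classical.arbitrary V, fun b => ?_⟩
    subst hFe
    simp [Fsub]
  · induction f using Sym2.ind with
    | _ x y =>
      have hadj : (HG V).Adj x y := (HG V).mem_edgeSet.mp (hFE hf)
      obtain ⟨j, hj, hju⟩ := hadj
      refine ⟨j, fun b => ?_⟩
      have h1 : (Fsub j F b).card ≤ (F.erase s(x, y)).card := by
        refine Finset.card_le_card_of_injOn (fun s => s.map (extd j b)) ?_ ?_
        · intro s hs
          refine Finset.mem_erase.mpr ⟨?_, mem_Fsub.mp hs⟩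
          induction s using Sym2.ind with
          | _ p q =>
            show Sym2.map (extd j b) s(p, q) ≠ s(x, y)
            rw [Sym2.map_pair_eq]
            intro hEq
            rw [Sym2.eq_iff] at hEq
            rcases hEq with ⟨h1, h2⟩ | ⟨h1, h2⟩ <;>
              exact hj (by rw [← h1, ← h2, extd_apply_d, extd_apply_d])
        · intro s _ t _ h
          exact Sym2.map.injective (extd_inj j b) h
      have h2 : (F.erase s(x, y)).card = F.card - 1 := Finset.card_erase_of_mem hf
      omega

lemma bool_resolve {x b : Bool} (h : x ≠ b) : x = !b := by
  cases x <;> cases b <;> simp_all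

lemma mem_map_extd_coord {d : V} (b : Bool) (l : List ({i : V // i ≠ d} → Bool))
    {x : V → Bool} (hx : x ∈ l.map (extd d b)) : x d = b := by
  rcases List.mem_map.mp hx with ⟨w, _, rfl⟩
  simp

end Aux2
open Finset SimpleGraph

section Glue
variable {V : Type} [DecidableEq V] [Fintype V]

lemma glueA (d : V) (b₀ : Bool) (F : Finset (Sym2 (V → Bool)))
    {u₀ v₀ a b : {i : V // i ≠ d} → Bool}
    (q1 : (HG {i : V // i ≠ d}).Walk u₀ a) (q2 : (HG {i : V // i ≠ d}).Walk b v₀)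
    (P1 : (HG {i : V // i ≠ d}).Walk a b)
    (hnd13 : (q1.support ++ q2.support).Nodup)
    (hP1path : P1.IsPath)
    (hcov0 : ∀ x, x ∈ q1.support ++ q2.support)
    (hcov1 : ∀ x, x ∈ P1.support)
    (hq1e : ∀ s ∈ q1.edges, Sym2.map (extd d b₀) s ∉ F)
    (hq2e : ∀ s ∈ q2.edges, Sym2.map (extd d b₀) s ∉ F)
    (hP1e : ∀ s ∈ P1.edges, Sym2.map (extd d (!b₀)) s ∉ F)
    (haW : s(extd d false a, extd d true a) ∉ F)
    (hbW : s(extd d false b, extd d true b) ∉ F) :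
    ∃ p : (HG V).Walk (extd d b₀ u₀) (extd d b₀ v₀),
      p.IsPath ∧ (∀ x, x ∈ p.support) ∧ ∀ s ∈ p.edges, s ∉ F := by
  have hc1 : (HG V).Adj (extd d b₀ a) (extd d (!b₀) a) :=
    adj_cross d (by cases b₀ <;> simp) a
  have hc2 : (HG V).Adj (extd d (!b₀) b) (extd d b₀ b) :=
    adj_cross d (by cases b₀ <;> simp) b
  refine ⟨(q1.map (extHom d b₀)).append (Walk.cons hc1
      ((P1.map (extHom d (!b₀))).append (Walk.cons hc2 (q2.map (extHom d b₀))))), ?_, ?_, ?_⟩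
  pick_goal 3
  · -- edges avoid F
    intro s hs
    simp only [Walk.edges_append, Walk.edges_cons, Walk.edges_map, extHom_coe,
      List.mem_append, List.mem_cons] at hs
    have hswapa : s(extd d b₀ a, extd d (!b₀) a) = s(extd d false a, extd d true a) := by
      cases b₀
      · rfl
      · exact Sym2.eq_swap
    have hswapb : s(extd d (!b₀) b, extd d b₀ b) = s(extd d false b, extd d true b) := by
      cases b₀
      · exact Sym2.eq_swap
      · rfl
    rcases hs with hs | (rfl | (hs | (rfl | hs)))
    · rcases List.mem_map.mp hs with ⟨t, ht, rfl⟩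
      exact hq1e t ht
    · rw [hswapa]; exact haW
    · rcases List.mem_map.mp hs with ⟨t, ht, rfl⟩
      exact hP1e t ht
    · rw [hswapb]; exact hbW
    · rcases List.mem_map.mp hs with ⟨t, ht, rfl⟩
      exact hq2e t ht
  all_goals
    have hsupp : ((q1.map (extHom d b₀)).append (Walk.cons hc1
        ((P1.map (extHom d (!b₀))).append (Walk.cons hc2 (q2.map (extHom d b₀)))))).support =
        (q1.support.map (extd d b₀)) ++
          ((P1.support.map (extd d (!b₀))) ++ (q2.support.map (extd d b₀))) := by
      simp only [Walk.support_append, Walk.support_cons, List.tail_cons, Walk.support_map,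
        extHom_coe]
  · -- IsPath
    apply Walk.IsPath.mk'
    rw [hsupp]
    have hnd13' : ((q1.support.map (extd d b₀)) ++ (q2.support.map (extd d b₀))).Nodup := by
      rw [← List.map_append]
      exact hnd13.map (extd_inj d b₀)
    have hL1 := hnd13'.of_append_left
    have hL3 := hnd13'.of_append_right
    have hd13 : (q1.support.map (extd d b₀)).Disjoint (q2.support.map (extd d b₀)) :=
      List.disjoint_of_nodup_append hnd13'
    have hL2 : (P1.support.map (extd d (!b₀))).Nodup :=
      hP1path.support_nodup.map (extd_inj d (!b₀))
    have hbne : ∀ x : V → Bool, x d = b₀ → x d = !b₀ → False := by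
      intro x h1 h2
      rw [h1] at h2
      simp at h2
    rw [List.nodup_append]
    refine ⟨hL1, ?_, ?_⟩
    · rw [List.nodup_append]
      refine ⟨hL2, hL3, ?_⟩
      intro x hx2 _ hx3 rfl
      exact hbne x (mem_map_extd_coord b₀ _ hx3) (mem_map_extd_coord (!b₀) _ hx2)
    · intro x hx1 _ hx rfl
      rcases List.mem_append.mp hx with hx2 | hx3
      · exact hbne x (mem_map_extd_coord b₀ _ hx1) (mem_map_extd_coord (!b₀) _ hx2)
      · exact hd13 hx1 hx3
  · -- coverage
    intro x
    rw [hsupp]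
    by_cases hx : x d = b₀
    · have hxm : resd d x ∈ q1.support ++ q2.support := hcov0 _
      rcases List.mem_append.mp hxm with h | h
      · exact List.mem_append_left _ (List.mem_map.mpr ⟨_, h, extd_resd d hx⟩)
      · exact List.mem_append_right _
          (List.mem_append_right _ (List.mem_map.mpr ⟨_, h, extd_resd d hx⟩))
    · have hx' : x d = !b₀ := bool_resolve hx
      exact List.mem_append_right _
        (List.mem_append_left _ (List.mem_map.mpr ⟨_, hcov1 (resd d x), extd_resd d hx'⟩))

lemma glueB (d : V) (b₀ : Bool) (F : Finset (Sym2 (V → Bool)))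
    {u₀ w v₁ : {i : V // i ≠ d} → Bool}
    (P0 : (HG {i : V // i ≠ d}).Walk u₀ w) (P1 : (HG {i : V // i ≠ d}).Walk w v₁)
    (hP0path : P0.IsPath) (hP1path : P1.IsPath)
    (hcov0 : ∀ x, x ∈ P0.support) (hcov1 : ∀ x, x ∈ P1.support)
    (hP0e : ∀ s ∈ P0.edges, Sym2.map (extd d b₀) s ∉ F)
    (hP1e : ∀ s ∈ P1.edges, Sym2.map (extd d (!b₀)) s ∉ F)
    (hwW : s(extd d false w, extd d true w) ∉ F) :
    ∃ p : (HG V).Walk (extd d b₀ u₀) (extd d (!b₀) v₁),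
      p.IsPath ∧ (∀ x, x ∈ p.support) ∧ ∀ s ∈ p.edges, s ∉ F := by
  have hc1 : (HG V).Adj (extd d b₀ w) (extd d (!b₀) w) :=
    adj_cross d (by cases b₀ <;> simp) w
  refine ⟨(P0.map (extHom d b₀)).append (Walk.cons hc1 (P1.map (extHom d (!b₀)))), ?_, ?_, ?_⟩
  pick_goal 3
  · intro s hs
    simp only [Walk.edges_append, Walk.edges_cons, Walk.edges_map, extHom_coe,
      List.mem_append, List.mem_cons] at hs
    have hswap : s(extd d b₀ w, extd d (!b₀) w) = s(extd d false w, extd d true w) := by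
      cases b₀
      · rfl
      · exact Sym2.eq_swap
    rcases hs with hs | (rfl | hs)
    · rcases List.mem_map.mp hs with ⟨t, ht, rfl⟩
      exact hP0e t ht
    · rw [hswap]; exact hwW
    · rcases List.mem_map.mp hs with ⟨t, ht, rfl⟩
      exact hP1e t ht
  all_goals
    have hsupp : ((P0.map (extHom d b₀)).append
        (Walk.cons hc1 (P1.map (extHom d (!b₀))))).support =
        (P0.support.map (extd d b₀)) ++ (P1.support.map (extd d (!b₀))) := by
      simp only [Walk.support_append, Walk.support_cons, List.tail_cons, Walk.support_map,
        extHom_coe]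
  · apply Walk.IsPath.mk'
    rw [hsupp, List.nodup_append]
    refine ⟨hP0path.support_nodup.map (extd_inj d b₀),
      hP1path.support_nodup.map (extd_inj d (!b₀)), ?_⟩
    intro x hx1 _ hx2 rfl
    have h1 := mem_map_extd_coord b₀ _ hx1
    have h2 := mem_map_extd_coord (!b₀) _ hx2
    rw [h1] at h2
    simp at h2
  · intro x
    rw [hsupp]
    by_cases hx : x d = b₀
    · exact List.mem_append_left _ (List.mem_map.mpr ⟨_, hcov0 (resd d x), extd_resd d hx⟩)
    · exact List.mem_append_right _
        (List.mem_map.mpr ⟨_, hcov1 (resd d x), extd_resd d (bool_resolve hx)⟩)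

end Glue
open Finset SimpleGraph

lemma HL (m : ℕ) : ∀ (V : Type) [DecidableEq V] [Fintype V], Fintype.card V = m →
    ∀ (F : Finset (Sym2 (V → Bool))), (↑F ⊆ (HG V).edgeSet) → F.card ≤ m - 2 →
    ∀ (u v : V → Bool), Odd (nd u v) →
    ∃ p : (HG V).Walk u v, p.IsPath ∧ (∀ x, x ∈ p.support) ∧ ∀ s ∈ p.edges, s ∉ F := by
  induction m using Nat.strong_induction_on with
  | _ m ih =>
  intro V instD instF hm F hFE hFc u v hodd
  rcases m with _ | (_ | k)
  · -- m = 0 : impossible, no odd pair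
    exfalso
    haveI : IsEmpty V := Fintype.card_eq_zero_iff.mp hm
    have h0 : nd u v = 0 := by simp [nd]
    rw [h0] at hodd
    simp at hodd
  · -- m = 1 : single edge
    obtain ⟨d, hdall⟩ := Fintype.card_eq_one_iff.mp hm
    have hnd1 : nd u v = 1 := by
      have hle : nd u v ≤ 1 := by
        have h := Finset.card_filter_le (univ : Finset V) (fun i => u i ≠ v i)
        rwa [Finset.card_univ, hm] at h
      obtain ⟨t, ht⟩ := hodd
      omega
    have hadj : (HG V).Adj u v := adj_iff_nd.mpr hnd1
    have hFempty : F = ∅ := Finset.card_eq_zero.mp (by omega)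
    have hd_diff : u d ≠ v d := by
      intro hconst
      have h0 : nd u v = 0 := by
        rw [nd, Finset.card_eq_zero]
        ext i
        simp only [mem_filter, mem_univ, true_and, Finset.notMem_empty, iff_false, not_not]
        rw [hdall i]
        exact hconst
      omega
    refine ⟨Walk.cons hadj Walk.nil, ?_, ?_, ?_⟩
    · simp [Walk.cons_isPath_iff, hadj.ne]
    · intro x
      simp only [Walk.support_cons, Walk.support_nil, List.mem_cons, List.mem_singleton]
      by_cases hx : x d = u d
      · left; funext i; rw [hdall i]; exact hx
      · right; left
        funext i
        rw [hdall i, bool_resolve hx, bool_resolve (Ne.symm hd_diff)]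
    · subst hFempty; simp
  · -- m = k + 2 : inductive step
    have hVne : Nonempty V := by
      rw [← Fintype.card_pos_iff, hm]; omega
    obtain ⟨d, hd⟩ := exists_dim F hFE
    have hFk : F.card ≤ k := by omega
    have hdk : ∀ b, (Fsub d F b).card ≤ k - 1 := fun b => le_trans (hd b) (by omega)
    have hsubcard : Fintype.card {i : V // i ≠ d} = k + 1 := by
      have h := Fintype.card_subtype_compl (fun i : V => i = d)
      rw [Fintype.card_subtype_eq, hm] at h
      exact h
    have ihσ := ih (k + 1) (by omega) {i : V // i ≠ d} hsubcard
    have hWk : (Wcross d F).card ≤ k := le_trans (Wcross_card d F) hFk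
    have hcardfun : Fintype.card ({i : V // i ≠ d} → Bool) = 2 ^ (k + 1) := by
      rw [Fintype.card_fun, Fintype.card_bool, hsubcard]
    have hu' : extd d (u d) (resd d u) = u := extd_resd d rfl
    by_cases hud : u d = v d
    · -- Case A : u and v lie in the same subcube
      have hv' : extd d (u d) (resd d v) = v := extd_resd d hud.symm
      have hoddσ : Odd (nd (resd d u) (resd d v)) := by
        have heq : nd u v = nd (resd d u) (resd d v) := by
          conv_lhs => rw [← hu', ← hv']
          rw [nd_extd]; simp
        rwa [heq] at hodd
      obtain ⟨P0, hP0path, hP0supp, hP0edges⟩ :=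
        ihσ (Fsub d F (u d)) (Fsub_edgeSet hFE (u d)) (by have := hdk (u d); omega)
          (resd d u) (resd d v) hoddσ
      have hP0len : P0.length = 2 ^ (k + 1) - 1 := by
        have hham := hP0path.isHamiltonian_of_mem hP0supp
        have h := hham.length_eq
        rwa [hcardfun] at h
      obtain ⟨a, b, hab, q1, q2, hsplit, haW, hbW⟩ :=
        split_good P0.length P0 rfl hP0path (Wcross d F) (by
          have h2k : k < 2 ^ k := Nat.lt_two_pow_self
          have hp2 : 2 ^ (k + 1) = 2 * 2 ^ k := by ring
          rw [hP0len]
          omega)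
      have hoddab : Odd (nd a b) := by rw [adj_iff_nd.mp hab]; exact odd_one
      obtain ⟨P1, hP1path, hP1supp, hP1edges⟩ :=
        ihσ (Fsub d F (!u d)) (Fsub_edgeSet hFE (!u d)) (by have := hdk (!u d); omega)
          a b hoddab
      have hP0supp_eq : P0.support = q1.support ++ q2.support := by
        rw [hsplit]
        simp only [Walk.support_append, Walk.support_cons, List.tail_cons]
      obtain ⟨p0, hp1, hp2, hp3⟩ := glueA d (u d) F q1 q2 P1
        (hP0supp_eq ▸ hP0path.support_nodup)
        hP1path
        (fun x => hP0supp_eq ▸ hP0supp x)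
        hP1supp
        (fun s hs hmem => hP0edges s
          (by rw [hsplit, Walk.edges_append]; exact List.mem_append_left _ hs)
          (mem_Fsub.mpr hmem))
        (fun s hs hmem => hP0edges s
          (by rw [hsplit, Walk.edges_append, Walk.edges_cons]
              exact List.mem_append_right _ (List.mem_cons_of_mem _ hs))
          (mem_Fsub.mpr hmem))
        (fun s hs hmem => hP1edges s hs (mem_Fsub.mpr hmem))
        (fun hmem => haW (mem_Wcross.mpr hmem))
        (fun hmem => hbW (mem_Wcross.mpr hmem))
      exact ⟨p0.copy hu' hv',
        Walk.IsPath.mk' (by rw [Walk.support_copy]; exact hp1.support_nodup),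
        fun x => by rw [Walk.support_copy]; exact hp2 x,
        fun s hs => hp3 s (by rwa [Walk.edges_copy] at hs)⟩
    · -- Case B : u and v lie in different subcubes
      have hvb : v d = !u d := bool_resolve (fun h => hud h.symm)
      have hv' : extd d (!u d) (resd d v) = v := extd_resd d hvb
      have hpar : nd u v = nd (resd d u) (resd d v) + 1 := by
        conv_lhs => rw [← hu', ← hv']
        rw [nd_extd]
        simp
      have hEuv : ¬ Odd (nd (resd d u) (resd d v)) := by
        rw [Nat.odd_iff] at hodd ⊢
        omega
      have hcardO : (univ.filter fun w : {i : V // i ≠ d} → Bool =>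
          Odd (nd (resd d u) w)).card = 2 ^ k := by
        have h := card_odd_filter (V := {i : V // i ≠ d}) (by rw [hsubcard]; omega) (resd d u)
        rw [hsubcard] at h
        simpa using h
      obtain ⟨w, hw⟩ : ((univ.filter fun w : {i : V // i ≠ d} → Bool =>
          Odd (nd (resd d u) w)) \ Wcross d F).Nonempty := by
        rw [← Finset.card_pos]
        have hle := Finset.le_card_sdiff (Wcross d F)
          (univ.filter fun w : {i : V // i ≠ d} → Bool => Odd (nd (resd d u) w))
        have h2k : k < 2 ^ k := Nat.lt_two_pow_self
        omega
      rw [Finset.mem_sdiff, Finset.mem_filter] at hw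
      have hodd0 : Odd (nd (resd d u) w) := hw.1.2
      have hodd1 : Odd (nd w (resd d v)) := by
        rw [odd_iff_cast] at hodd0 ⊢
        have hEuv' := even_iff_cast.mp hEuv
        rw [nd_cast] at hodd0 hEuv' ⊢
        have hz : ∀ x : ZMod 2, x + x = 0 := by decide
        have hre : (s2 (resd d u) + s2 w) + (s2 (resd d u) + s2 (resd d v)) =
            s2 w + s2 (resd d v) := by
          rw [add_add_add_comm, hz, zero_add]
        rw [← hre, hodd0, hEuv', add_zero]
      obtain ⟨P0, hP0path, hP0supp, hP0edges⟩ :=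
        ihσ (Fsub d F (u d)) (Fsub_edgeSet hFE (u d)) (by have := hdk (u d); omega)
          (resd d u) w hodd0
      obtain ⟨P1, hP1path, hP1supp, hP1edges⟩ :=
        ihσ (Fsub d F (!u d)) (Fsub_edgeSet hFE (!u d)) (by have := hdk (!u d); omega)
          w (resd d v) hodd1
      obtain ⟨p0, hp1, hp2, hp3⟩ := glueB d (u d) F P0 P1 hP0path hP1path hP0supp hP1supp
        (fun s hs hmem => hP0edges s hs (mem_Fsub.mpr hmem))
        (fun s hs hmem => hP1edges s hs (mem_Fsub.mpr hmem))
        (fun hmem => hw.2 (mem_Wcross.mpr hmem))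
      exact ⟨p0.copy hu' hv',
        Walk.IsPath.mk' (by rw [Walk.support_copy]; exact hp1.support_nodup),
        fun x => by rw [Walk.support_copy]; exact hp2 x,
        fun s hs => hp3 s (by rwa [Walk.edges_copy] at hs)⟩

open Finset SimpleGraph

lemma end_edge_not_mem {α : Type} {G : SimpleGraph α} {x y : α} (p : G.Walk x y)
    (hp : p.IsPath) (hl : 1 < p.length) : s(x, y) ∉ p.edges := by
  intro hmem
  cases p with
  | nil => simp at hmem
  | @cons _ c _ h q =>
    rw [Walk.edges_cons, List.mem_cons] at hmem
    rcases hmem with heq | hmem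
    · rw [Sym2.eq_iff] at heq
      rcases heq with ⟨-, hyc⟩ | ⟨hxc, -⟩
      · subst hyc
        have hq : q = Walk.nil := Walk.isPath_iff_eq_nil.mp hp.of_cons
        rw [hq] at hl
        simp at hl
      · exact h.ne hxc
    · exact ((Walk.cons_isPath_iff _ _).mp hp).2 (q.fst_mem_support_of_mem_edges hmem)


theorem stmt_9 (n : ℕ) (hn : 3 ≤ n) (F : Finset (Sym2 (Fin n → Bool)))
    (hF : (F : Set (Sym2 (Fin n → Bool))) ⊆ (Q n).edgeSet) (hcard : F.card ≤ n - 2)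
    (e : Sym2 (Fin n → Bool)) (he : e ∈ (Q n).edgeSet) (hef : e ∉ F) :
    ∃ (v : Fin n → Bool) (c : ((Q n).deleteEdges ↑F).Walk v v),
      c.IsHamiltonianCycle ∧ e ∈ c.edges := by

  have hQ : Q n = HG (Fin n) := rfl
  induction e using Sym2.ind with
  | _ x y =>
  have hadj : (HG (Fin n)).Adj x y := by
    rw [← hQ, ← SimpleGraph.mem_edgeSet]
    exact he
  have hodd : Odd (nd x y) := by
    rw [adj_iff_nd.mp hadj]
    exact odd_one
  obtain ⟨p, hpath, hsupp, hedges⟩ := HL n (Fin n) (Fintype.card_fin n) F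
    (by rw [← hQ]; exact hF) hcard x y hodd
  have hlen : p.length = 2 ^ n - 1 := by
    have hham := hpath.isHamiltonian_of_mem hsupp
    have h := hham.length_eq
    rwa [Fintype.card_fun, Fintype.card_bool, Fintype.card_fin] at h
  have hlen1 : 1 < p.length := by
    have h8 : 2 ^ 3 ≤ 2 ^ n := Nat.pow_le_pow_right (by omega) hn
    rw [hlen]
    omega
  have hnotmem : s(x, y) ∉ p.edges := end_edge_not_mem p hpath hlen1
  have hsubG : ∀ s ∈ p.edges, s ∈ ((Q n).deleteEdges ↑F).edgeSet := by
    intro s hs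
    rw [SimpleGraph.edgeSet_deleteEdges, Set.mem_diff]
    constructor
    · rw [hQ]
      exact p.edges_subset_edgeSet hs
    · intro hsF
      exact hedges s hs (Finset.mem_coe.mp hsF)
  have p' := p.transfer ((Q n).deleteEdges ↑F) hsubG
  have hyx : ((Q n).deleteEdges ↑F).Adj y x := by
    rw [SimpleGraph.deleteEdges_adj]
    constructor
    · rw [hQ]
      exact hadj.symm
    · rw [Sym2.eq_swap]
      intro hmem
      exact hef (Finset.mem_coe.mp hmem)
  refine ⟨y, Walk.cons hyx (p.transfer ((Q n).deleteEdges ↑F) hsubG), ?_, ?_⟩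
  · rw [Walk.isHamiltonianCycle_iff_isCycle_and_support_count_tail_eq_one]
    constructor
    · rw [Walk.cons_isCycle_iff]
      refine ⟨hpath.transfer hsubG, ?_⟩
      rw [Walk.edges_transfer, Sym2.eq_swap]
      exact hnotmem
    · intro a
      have : (Walk.cons hyx (p.transfer ((Q n).deleteEdges ↑F) hsubG)).support.tail =
          p.support := by
        rw [Walk.support_cons, List.tail_cons, Walk.support_transfer]
      rw [this]
      exact hpath.isHamiltonian_of_mem hsupp a
  · rw [Walk.edges_cons]
    refine List.mem_cons.mpr (Or.inl ?_)
    rw [Sym2.eq_swap]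
end

section
/- For every n ≥ 2 and every perfect matching M of the complete graph K(Q_n) on the vertex set of Q_n, there exists a perfect matching R of Q_n such that M ∪ R forms a Hamiltonian cycle of K(Q_n). -/
namespace FinkAux

open Relation Function

variable {W : Type*}

def JStep (μ ρ : W → W) : W → W → Prop := fun x y => y = μ x ∨ y = ρ x

lemma jstep_symm {μ ρ : W → W} (hμ : Involutive μ) (hρ : Involutive ρ) :
    Symmetric (JStep μ ρ) := by
  rintro x y (rfl | rfl)
  · exact Or.inl (hμ x).symm
  · exact Or.inr (hρ x).symm

lemma reach_symm {μ ρ : W → W} (hμ : Involutive μ) (hρ : Involutive ρ) :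
    Symmetric (ReflTransGen (JStep μ ρ)) :=
  fun a b h => (haveI : Std.Symm (JStep μ ρ) := ⟨jstep_symm hμ hρ⟩; Std.Symm.symm a b h)

end FinkAux
namespace FinkAux

open Relation Function

/-- flipping coordinate `i` -/
def flip (n : ℕ) (i : Fin n) : (Fin n → Bool) → (Fin n → Bool) :=
  fun x => Function.update x i (!x i)

lemma flip_invol (n : ℕ) (i : Fin n) : Involutive (flip n i) := by
  intro x
  funext j
  by_cases h : j = i
  · subst h
    simp [flip]
  · simp [flip, Function.update_of_ne h]

lemma flip_adj (n : ℕ) (i : Fin n) (x : Fin n → Bool) : (Q n).Adj x (flip n i x) := by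
  refine ⟨i, ?_, ?_⟩
  · simp [flip]
  · intro j hj
    by_contra hji
    rw [flip, Function.update_of_ne hji] at hj
    exact hj rfl

lemma flip_ne (n : ℕ) (i : Fin n) (x : Fin n → Bool) : flip n i x ≠ x :=
  ((flip_adj n i x).ne).symm

/-- the conclusion of Fink's theorem, in involution language -/
def Qext (n : ℕ) (μ ρ : (Fin n → Bool) → (Fin n → Bool)) : Prop :=
  Function.Involutive ρ ∧ (∀ x, (Q n).Adj x (ρ x)) ∧ (∀ x, ρ x ≠ μ x) ∧
    ∀ u v, Relation.ReflTransGen (JStep μ ρ) u v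

lemma card_v2 : Fintype.card (Fin 2 → Bool) = 4 := by
  rw [Fintype.card_fun]
  norm_num

lemma fink_base (μ : (Fin 2 → Bool) → (Fin 2 → Bool)) (hμinv : Involutive μ)
    (hμfp : ∀ x, μ x ≠ x) : ∃ ρ, Qext 2 μ ρ := by
  classical
  set x₀ : Fin 2 → Bool := fun _ => false with hx₀
  set v : Fin 2 → Bool := μ x₀ with hvdef
  have hv : v ≠ x₀ := hμfp x₀
  have hex : ∃ i : Fin 2, flip 2 i x₀ ≠ v := by
    by_contra h
    push_neg at h
    have h01 : flip 2 0 x₀ = flip 2 1 x₀ := (h 0).trans (h 1).symm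
    have h2 := congrFun h01 0
    simp [flip, Function.update_apply, hx₀] at h2
  obtain ⟨i, hi⟩ := hex
  set p : Fin 2 → Bool := flip 2 i x₀ with hpdef
  set q : Fin 2 → Bool := μ p with hqdef
  have hρinv : Involutive (flip 2 i) := flip_invol 2 i
  have hpx : p ≠ x₀ := flip_ne 2 i x₀
  have hqp : q ≠ p := hμfp p
  have hμv : μ v = x₀ := hμinv x₀
  have hμq : μ q = p := hμinv p
  have hqx : q ≠ x₀ := by
    intro h
    have : μ q = μ x₀ := by rw [h]
    rw [hμq, ← hvdef] at this
    exact hi this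
  have hqv : q ≠ v := by
    intro h
    have : μ q = μ v := by rw [h]
    rw [hμq, hμv] at this
    exact hpx this
  have hmem : ∀ y : Fin 2 → Bool, y = x₀ ∨ y = v ∨ y = p ∨ y = q := by
    intro y
    have h1 : x₀ ∉ ({v, p, q} : Finset (Fin 2 → Bool)) := by
      simp only [Finset.mem_insert, Finset.mem_singleton]
      push_neg
      exact ⟨hv.symm.symm.symm, hpx.symm.symm.symm, hqx.symm.symm.symm⟩
    have h2 : v ∉ ({p, q} : Finset (Fin 2 → Bool)) := by
      simp only [Finset.mem_insert, Finset.mem_singleton]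
      push_neg
      exact ⟨fun hh => hi hh.symm, fun hh => hqv hh.symm⟩
    have h3 : p ∉ ({q} : Finset (Fin 2 → Bool)) := by
      simp only [Finset.mem_singleton]
      exact fun hh => hqp hh.symm
    have hcard : ({x₀, v, p, q} : Finset (Fin 2 → Bool)).card = 4 := by
      rw [Finset.card_insert_of_notMem h1, Finset.card_insert_of_notMem h2,
        Finset.card_insert_of_notMem h3, Finset.card_singleton]
    have huniv : ({x₀, v, p, q} : Finset (Fin 2 → Bool)) = Finset.univ :=
      Finset.eq_univ_of_card _ (hcard.trans card_v2.symm)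
    have : y ∈ ({x₀, v, p, q} : Finset (Fin 2 → Bool)) := by
      rw [huniv]; exact Finset.mem_univ y
    simpa [Finset.mem_insert, Finset.mem_singleton] using this
  have hρvq : flip 2 i v = q := by
    have h1 : flip 2 i v ≠ v := flip_ne 2 i v
    have h2 : flip 2 i v ≠ x₀ := by
      intro h
      have := congrArg (flip 2 i) h
      rw [hρinv v] at this
      exact hi this.symm
    have h3 : flip 2 i v ≠ p := by
      intro h
      have := congrArg (flip 2 i) h
      rw [hρinv v, hpdef, hρinv x₀] at this
      exact hv this
    rcases hmem (flip 2 i v) with h | h | h | h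
    · exact absurd h h2
    · exact absurd h h1
    · exact absurd h h3
    · exact h
  have hρqv : flip 2 i q = v := by
    have h := congrArg (flip 2 i) hρvq
    rw [hρinv v] at h
    exact h.symm
  refine ⟨flip 2 i, hρinv, fun x => flip_adj 2 i x, ?_, ?_⟩
  · intro y
    rcases hmem y with rfl | rfl | rfl | rfl
    · rw [← hvdef, ← hpdef]
      exact hi
    · rw [hμv, hρvq]
      exact hqx
    · have h5 : flip 2 i p = x₀ := hρinv x₀
      rw [h5, ← hqdef]
      exact fun h => hqx h.symm
    · rw [hμq, hρqv]
      exact fun h => hi h.symm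
  · -- connectivity
    have hsym := reach_symm hμinv hρinv
    have r1 : ReflTransGen (JStep μ (flip 2 i)) x₀ v := ReflTransGen.single (Or.inl rfl)
    have r2 : ReflTransGen (JStep μ (flip 2 i)) x₀ q := r1.tail (Or.inr hρvq.symm)
    have r3 : ReflTransGen (JStep μ (flip 2 i)) x₀ p := r2.tail (Or.inl hμq.symm)
    have hall : ∀ y, ReflTransGen (JStep μ (flip 2 i)) x₀ y := by
      intro y
      rcases hmem y with rfl | rfl | rfl | rfl
      · exact ReflTransGen.refl
      · exact r1
      · exact r3
      · exact r2
    intro a b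
    exact (hsym (hall a)).trans (hall b)


lemma mem_of_reach {r : W → W → Prop} {s : Set W}
    (hcl : ∀ a ∈ s, ∀ b, r a b → b ∈ s) {x y : W} (hx : x ∈ s)
    (h : ReflTransGen r x y) : y ∈ s := by
  induction h with
  | refl => exact hx
  | tail _ hbc ih => exact hcl _ ih _ hbc

lemma exists_endpoint [Finite W] (f g : W → W) (S : Set W)
    (hf : Involutive f) (hfp : ∀ x, f x ≠ x)
    (hg : Involutive g) (hgS : ∀ x ∈ S, g x = x) (hgS' : ∀ x ∉ S, g x ≠ x) :
    ∃ E : W → W, ∀ b ∈ S,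
      E b ∈ S ∧ E b ≠ b ∧ E (E b) = b ∧ (f b ∈ S → E b = f b) ∧
      ReflTransGen (JStep f g) b (E b) := by
  classical
  set u : W → ℕ → W := fun b i => (f ∘ g)^[i] (f b) with hu
  have hginj : Function.Injective g := hg.injective
  have hfinj : Function.Injective f := hf.injective
  have hσinj : Function.Injective (f ∘ g) := hfinj.comp hginj
  have hu0 : ∀ b, u b 0 = f b := fun b => rfl
  have husucc : ∀ b i, u b (i + 1) = f (g (u b i)) := by
    intro b i
    simp only [hu, Function.iterate_succ_apply', Function.comp_apply]
  have hupred : ∀ b i, 1 ≤ i → u b i = f (g (u b (i - 1))) := by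
    intro b i hi
    have h := husucc b (i - 1)
    rwa [Nat.sub_add_cancel hi] at h
  have hgSc : ∀ x, x ∉ S → g x ∉ S := by
    intro x hx hgx
    have h1 : g (g x) = g x := hgS _ hgx
    rw [hg x] at h1
    exact hx (h1 ▸ hgx)
  -- termination
  have hterm : ∀ b ∈ S, ∃ i, u b i ∈ S := by
    intro b hb
    by_contra hno
    push_neg at hno
    have key : ∀ i j : ℕ, i < j → u b i ≠ u b j := by
      intro i j hij heq
      have h1 : u b j = (f ∘ g)^[i] ((f ∘ g)^[j - i] (f b)) := by
        rw [hu]; simp only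
        rw [← Function.iterate_add_apply]
        congr 1
        omega
      have h2 : f b = u b (j - i) := by
        have := heq
        rw [h1] at this
        exact hσinj.iterate i this
      have h3 : u b (j - i) = f (g (u b (j - i - 1))) := hupred b (j - i) (by omega)
      rw [h3] at h2
      have h4 : b = g (u b (j - i - 1)) := hfinj h2
      have h5 := congrArg g h4
      rw [hg] at h5
      have h6 : u b (j - i - 1) = b := h5.symm.trans (hgS b hb)
      exact hno (j - i - 1) (by rw [h6]; exact hb)
    obtain ⟨i, j, hij, heq⟩ := Finite.exists_ne_map_eq_of_infinite (fun i : ℕ => u b i)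
    rcases hij.lt_or_gt with h | h
    · exact key i j h heq
    · exact key j i h heq.symm
  set k : W → ℕ := fun b => sInf {i | u b i ∈ S} with hk
  have hkS : ∀ b ∈ S, u b (k b) ∈ S := fun b hb => Nat.sInf_mem (hterm b hb)
  have hkmin : ∀ b, ∀ i, i < k b → u b i ∉ S := fun b i hi => Nat.notMem_of_lt_sInf hi
  -- reflection identities
  have claim2 : ∀ b, 1 ≤ k b → ∀ j, j ≤ k b - 1 → u (u b (k b)) j = g (u b (k b - 1 - j)) := by
    intro b hkb j
    induction j with
    | zero =>
      intro _
      have h1 : u b (k b) = f (g (u b (k b - 1))) := hupred b (k b) hkb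
      rw [hu0, h1, hf]
      simp
    | succ j ih =>
      intro hj
      have hj' : j ≤ k b - 1 := by omega
      have h1 : u (u b (k b)) (j + 1) = f (g (u (u b (k b)) j)) := husucc _ _
      rw [h1, ih hj', hg]
      have h2 : u b (k b - 1 - j) = f (g (u b (k b - 1 - j - 1))) :=
        hupred b (k b - 1 - j) (by omega)
      rw [h2, hf]
      congr 2
  have claim3 : ∀ b, 1 ≤ k b → u (u b (k b)) (k b) = b := by
    intro b hkb
    have h1 : u (u b (k b)) (k b) = f (g (u (u b (k b)) (k b - 1))) :=
      hupred (u b (k b)) (k b) hkb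
    rw [h1, claim2 b hkb (k b - 1) le_rfl]
    have : k b - 1 - (k b - 1) = 0 := by omega
    rw [this, hg, hu0, hf]
  -- E b ≠ b
  have hne : ∀ b ∈ S, u b (k b) ≠ b := by
    intro b hb heq
    rcases Nat.eq_zero_or_pos (k b) with h0 | h1
    · rw [h0, hu0] at heq
      exact hfp b heq
    · have hid : ∀ j, j ≤ k b - 1 → u b j = g (u b (k b - 1 - j)) := by
        intro j hj
        have := claim2 b h1 j hj
        rwa [heq] at this
      rcases Nat.even_or_odd (k b - 1) with ⟨j, hj⟩ | ⟨j, hj⟩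
      · have h2 := hid j (by omega)
        have h3 : k b - 1 - j = j := by omega
        rw [h3] at h2
        exact hgS' _ (hkmin b j (by omega)) h2.symm
      · have h2 := hid j (by omega)
        have h3 : k b - 1 - j = j + 1 := by omega
        rw [h3, husucc] at h2
        have h4 : g (u b j) = f (g (u b j)) := by
          conv_lhs => rw [h2]
          rw [hg]
        exact hfp (g (u b j)) h4.symm
  have hreach : ∀ b i, ReflTransGen (JStep f g) b (u b i) := by
    intro b i
    induction i with
    | zero => exact ReflTransGen.single (Or.inl (hu0 b).symm)
    | succ i ih =>
      refine ih.tail (Or.inr rfl) |>.tail ?_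
      rw [husucc]
      exact Or.inl rfl
  refine ⟨fun b => if b ∈ S then u b (k b) else b, ?_⟩
  intro b hb
  simp only [if_pos hb]
  have hEbS : u b (k b) ∈ S := hkS b hb
  refine ⟨hEbS, hne b hb, ?_, ?_, hreach b (k b)⟩
  · -- E (E b) = b
    simp only [if_pos hEbS]
    set b' := u b (k b) with hb'
    rcases Nat.eq_zero_or_pos (k b) with h0 | h1
    · have hfb : b' = f b := by rw [hb', h0, hu0]
      have h2 : u b' 0 ∈ S := by rw [hu0, hfb, hf]; exact hb
      have hk0 : k b' = 0 := Nat.le_zero.mp (Nat.sInf_le h2)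
      rw [hk0, hu0, hfb, hf]
    · have hret : u b' (k b) = b := claim3 b h1
      have hlt : ∀ j, j < k b → u b' j ∉ S := by
        intro j hj
        have h2 := claim2 b h1 j (by omega)
        rw [h2]
        exact hgSc _ (hkmin b _ (by omega))
      have hkb' : k b' = k b := by
        have hle : k b' ≤ k b := Nat.sInf_le (by rw [Set.mem_setOf_eq, hret]; exact hb)
        rcases lt_or_eq_of_le hle with h | h
        · exact absurd (hkS b' hEbS) (hlt _ h)
        · exact h
      rw [hkb', hret]
  · -- f b ∈ S → E b = f b
    intro hfb
    have h2 : u b 0 ∈ S := by rw [hu0]; exact hfb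
    have hk0 : k b = 0 := Nat.le_zero.mp (Nat.sInf_le h2)
    rw [hk0, hu0]

end FinkAux

namespace FinkAux

open Relation Function

lemma prodEq {α β : Type*} {w : α × β} {a : α} {b : β} (h1 : w.1 = a) (h2 : w.2 = b) :
    w = (a, b) := by
  cases w
  simp_all

lemma btrue_of {b : Bool} (h : ¬ b = false) : b = true := by
  cases b
  · exact absurd rfl h
  · rfl

lemma bfalse_of {b : Bool} (h : ¬ b = true) : b = false := by
  cases b
  · rfl
  · exact absurd rfl h

lemma fink_step_core (n : ℕ) (hn : 2 ≤ n)
    (IH : ∀ μ : (Fin n → Bool) → (Fin n → Bool), Involutive μ → (∀ x, μ x ≠ x) →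
      ∃ ρ, Qext n μ ρ)
    (m : (Fin n → Bool) × Bool → (Fin n → Bool) × Bool)
    (hminv : Involutive m) (hmfp : ∀ w, m w ≠ w) (hcross : ∃ w, (m w).2 ≠ w.2) :
    ∃ ρW : (Fin n → Bool) × Bool → (Fin n → Bool) × Bool,
      Involutive ρW ∧ (∀ w, (Q n).Adj w.1 (ρW w).1 ∧ (ρW w).2 = w.2) ∧
      (∀ w, ρW w ≠ m w) ∧ (∀ u v, ReflTransGen (JStep m ρW) u v) := by
  classical
  have hi0 : 0 < n := by omega
  set i0 : Fin n := ⟨0, hi0⟩ with hi0def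
  -- the auxiliary involution on the `true` half
  set gν : (Fin n → Bool) × Bool → (Fin n → Bool) × Bool :=
    fun w => if w.2 = true then (flip n i0 w.1, true) else w with hgνdef
  set S₀ : Set ((Fin n → Bool) × Bool) := {w | w.2 = false} with hS₀def
  have hgν_fix : ∀ w ∈ S₀, gν w = w := by
    intro w hw
    have hw2 : w.2 = false := hw
    simp [hgνdef, hw2]
  have hgν_nfix : ∀ w ∉ S₀, gν w ≠ w := by
    intro w hw
    have hw2 : w.2 = true := btrue_of hw
    simp only [hgνdef, hw2, if_true]
    intro h
    exact flip_ne n i0 w.1 (congrArg Prod.fst h)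
  have hgν_inv : Involutive gν := by
    intro w
    by_cases hw : w.2 = true
    · simp only [hgνdef, hw, if_true]
      rw [flip_invol n i0 w.1]
      exact (prodEq rfl hw).symm
    · simp only [hgνdef, hw, if_false]
      simp [hw]
  obtain ⟨E₀, hE₀⟩ := exists_endpoint m gν S₀ hminv hmfp hgν_inv hgν_fix hgν_nfix
  have hmemA : ∀ x : Fin n → Bool, ((x, false) : (Fin n → Bool) × Bool) ∈ S₀ := fun x => rfl
  set m₀ : (Fin n → Bool) → (Fin n → Bool) := fun x => (E₀ (x, false)).1 with hm₀def
  have hE₀eq : ∀ x, E₀ (x, false) = (m₀ x, false) := by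
    intro x
    exact prodEq rfl (hE₀ (x, false) (hmemA x)).1
  have hm₀inv : Involutive m₀ := by
    intro x
    have h := (hE₀ (x, false) (hmemA x)).2.2.1
    rw [hE₀eq x] at h
    exact congrArg Prod.fst h
  have hm₀fp : ∀ x, m₀ x ≠ x := by
    intro x h
    have h2 := (hE₀ (x, false) (hmemA x)).2.1
    rw [hE₀eq x, h] at h2
    exact h2 rfl
  obtain ⟨ρ₀, hρ₀inv, hρ₀adj, hρ₀ne, hρ₀conn⟩ := IH m₀ hm₀inv hm₀fp
  have hρ₀fp : ∀ x, ρ₀ x ≠ x := fun x => (hρ₀adj x).ne'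
  -- second endpoint construction
  set gρ : (Fin n → Bool) × Bool → (Fin n → Bool) × Bool :=
    fun w => if w.2 = false then (ρ₀ w.1, false) else w with hgρdef
  set S₁ : Set ((Fin n → Bool) × Bool) := {w | w.2 = true} with hS₁def
  have hgρ_fix : ∀ w ∈ S₁, gρ w = w := by
    intro w hw
    have hw2 : w.2 = true := hw
    simp [hgρdef, hw2]
  have hgρ_nfix : ∀ w ∉ S₁, gρ w ≠ w := by
    intro w hw
    have hw2 : w.2 = false := bfalse_of hw
    simp only [hgρdef, hw2, if_true]
    intro h
    exact hρ₀fp w.1 (congrArg Prod.fst h)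
  have hgρ_inv : Involutive gρ := by
    intro w
    by_cases hw : w.2 = false
    · simp only [hgρdef, hw, if_true]
      rw [hρ₀inv w.1]
      exact (prodEq rfl hw).symm
    · simp only [hgρdef, hw, if_false]
      simp [hw]
  obtain ⟨E₁, hE₁⟩ := exists_endpoint m gρ S₁ hminv hmfp hgρ_inv hgρ_fix hgρ_nfix
  have hmemB : ∀ x : Fin n → Bool, ((x, true) : (Fin n → Bool) × Bool) ∈ S₁ := fun x => rfl
  set p₁ : (Fin n → Bool) → (Fin n → Bool) := fun x => (E₁ (x, true)).1 with hp₁def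
  have hE₁eq : ∀ x, E₁ (x, true) = (p₁ x, true) := by
    intro x
    exact prodEq rfl (hE₁ (x, true) (hmemB x)).1
  have hp₁inv : Involutive p₁ := by
    intro x
    have h := (hE₁ (x, true) (hmemB x)).2.2.1
    rw [hE₁eq x] at h
    exact congrArg Prod.fst h
  have hp₁fp : ∀ x, p₁ x ≠ x := by
    intro x h
    have h2 := (hE₁ (x, true) (hmemB x)).2.1
    rw [hE₁eq x, h] at h2
    exact h2 rfl
  obtain ⟨ρ₁, hρ₁inv, hρ₁adj, hρ₁ne, hρ₁conn⟩ := IH p₁ hp₁inv hp₁fp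
  -- the final matching
  set ρW : (Fin n → Bool) × Bool → (Fin n → Bool) × Bool :=
    fun w => if w.2 = false then (ρ₀ w.1, false) else (ρ₁ w.1, true) with hρWdef
  have hρWf : ∀ x : Fin n → Bool, ρW (x, false) = (ρ₀ x, false) := by
    intro x; simp [hρWdef]
  have hρWt : ∀ x : Fin n → Bool, ρW (x, true) = (ρ₁ x, true) := by
    intro x; simp [hρWdef]
  have hρWinv : Involutive ρW := by
    intro w
    by_cases hw : w.2 = false
    · rw [prodEq rfl hw, hρWf, hρWf, hρ₀inv]
    · have hw2 : w.2 = true := btrue_of hw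
      rw [prodEq rfl hw2, hρWt, hρWt, hρ₁inv]
  have hρWadj : ∀ w, (Q n).Adj w.1 (ρW w).1 ∧ (ρW w).2 = w.2 := by
    intro w
    by_cases hw : w.2 = false
    · rw [prodEq rfl hw, hρWf]
      exact ⟨hρ₀adj w.1, hw.symm ▸ rfl⟩
    · have hw2 : w.2 = true := btrue_of hw
      rw [prodEq rfl hw2, hρWt]
      exact ⟨hρ₁adj w.1, rfl⟩
  have hρWne : ∀ w, ρW w ≠ m w := by
    intro w
    by_cases hw : w.2 = false
    · rw [prodEq rfl hw, hρWf]
      intro h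
      have h2 : (m (w.1, false)).2 = false := by rw [← h]
      -- then m₀ w.1 = (m (w.1,false)).1
      have h3 : E₀ (w.1, false) = m (w.1, false) :=
        (hE₀ (w.1, false) (hmemA w.1)).2.2.2.1 h2
      have h4 : m₀ w.1 = (m (w.1, false)).1 := congrArg Prod.fst h3
      have h5 : ρ₀ w.1 = (m (w.1, false)).1 := congrArg Prod.fst h
      rw [← h4] at h5
      exact hρ₀ne w.1 h5
    · have hw2 : w.2 = true := btrue_of hw
      rw [prodEq rfl hw2, hρWt]
      intro h
      have h2 : (m (w.1, true)).2 = true := by rw [← h]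
      have h3 : E₁ (w.1, true) = m (w.1, true) :=
        (hE₁ (w.1, true) (hmemB w.1)).2.2.2.1 h2
      have h4 : p₁ w.1 = (m (w.1, true)).1 := congrArg Prod.fst h3
      have h5 : ρ₁ w.1 = (m (w.1, true)).1 := congrArg Prod.fst h
      rw [← h4] at h5
      exact hρ₁ne w.1 h5
  -- connectivity
  have hconv : ∀ a b, JStep m gρ a b → ReflTransGen (JStep m ρW) a b := by
    intro a b hab
    rcases hab with rfl | rfl
    · exact ReflTransGen.single (Or.inl rfl)
    · by_cases ha : a.2 = false
      · refine ReflTransGen.single (Or.inr ?_)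
        rw [prodEq (a := a.1) rfl ha, hρWf]
        simp [hgρdef, ha]
      · have h2 : gρ a = a := hgρ_fix a (btrue_of ha)
        rw [h2]
  have hreachB : ∀ x, ReflTransGen (JStep m ρW) (x, true) (p₁ x, true) := by
    intro x
    have h := (hE₁ (x, true) (hmemB x)).2.2.2.2
    have h2 := ReflTransGen.lift' (p := JStep m ρW) id (fun a b hab => hconv a b hab) _ _ h
    simpa [hE₁eq x, Function.onFun] using h2
  have hBB : ∀ x y, ReflTransGen (JStep m ρW) (x, true) (y, true) := by
    intro x y
    have h := hρ₁conn x y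
    refine ReflTransGen.lift' (p := JStep m ρW)
      (fun z => ((z, true) : (Fin n → Bool) × Bool)) ?_ _ _ h
    intro a b hab
    rcases hab with rfl | rfl
    · exact hreachB a
    · exact ReflTransGen.single (Or.inr (hρWt a).symm)
  have hγ : ∀ w, ∃ x, ReflTransGen (JStep m ρW) w (x, true) := by
    intro w
    by_cases hw : w.2 = true
    · exact ⟨w.1, by rw [← prodEq rfl hw]⟩
    · have hw2 : w.2 = false := bfalse_of hw
      by_contra hno
      push_neg at hno
      set C : Set ((Fin n → Bool) × Bool) := {z | ReflTransGen (JStep m ρW) w z} with hCdef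
      have hCB : ∀ z ∈ C, z.2 = false := by
        intro z hz
        by_cases h : z.2 = true
        · exact absurd (by rwa [prodEq rfl h] at hz) (hno z.1)
        · exact bfalse_of h
      have hCm : ∀ z ∈ C, m z ∈ C := fun z hz => hz.tail (Or.inl rfl)
      have hCρ : ∀ z ∈ C, ρW z ∈ C := fun z hz => hz.tail (Or.inr rfl)
      set CV : Set (Fin n → Bool) := {x | ((x, false) : (Fin n → Bool) × Bool) ∈ C} with hCVdef
      have hCVm₀ : ∀ x ∈ CV, m₀ x ∈ CV := by
        intro x hx
        have h1 : m (x, false) ∈ C := hCm _ hx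
        have h2 : (m (x, false)).2 = false := hCB _ h1
        have h3 : E₀ (x, false) = m (x, false) :=
          (hE₀ (x, false) (hmemA x)).2.2.2.1 h2
        have h4 : (m₀ x, false) = m (x, false) := by
          rw [← hE₀eq x, h3]
        show (m₀ x, false) ∈ C
        rw [h4]
        exact h1
      have hCVρ₀ : ∀ x ∈ CV, ρ₀ x ∈ CV := by
        intro x hx
        have h1 : ρW (x, false) ∈ C := hCρ _ hx
        rwa [hρWf] at h1
      -- a crossing vertex on the false side
      obtain ⟨w', hw'⟩ := hcross
      have hster : ∃ a : Fin n → Bool, (m (a, false)).2 = true := by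
        by_cases h1 : w'.2 = false
        · refine ⟨w'.1, ?_⟩
          rw [← prodEq rfl h1]
          by_cases h : (m w').2 = true
          · exact h
          · exact absurd ((bfalse_of h).trans h1.symm) hw'
        · have h1' : w'.2 = true := btrue_of h1
          have h2 : (m w').2 = false := by
            by_cases h : (m w').2 = false
            · exact h
            · exact absurd ((btrue_of h).trans h1'.symm) hw'
          refine ⟨(m w').1, ?_⟩
          rw [← prodEq rfl h2, hminv w', h1']
      obtain ⟨a, ha⟩ := hster
      have hwCV : w.1 ∈ CV := by
        show ((w.1, false) : (Fin n → Bool) × Bool) ∈ C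
        rw [← prodEq rfl hw2]
        exact ReflTransGen.refl
      have haCV : a ∈ CV := by
        refine mem_of_reach ?_ hwCV (hρ₀conn w.1 a)
        intro z hz y hy
        rcases hy with rfl | rfl
        · exact hCVm₀ z hz
        · exact hCVρ₀ z hz
      have h6 : m (a, false) ∈ C := hCm _ haCV
      have h7 := hCB _ h6
      rw [ha] at h7
      simp at h7
  refine ⟨ρW, hρWinv, hρWadj, hρWne, ?_⟩
  intro u v
  obtain ⟨x, hux⟩ := hγ u
  obtain ⟨y, hvy⟩ := hγ v
  exact hux.trans ((hBB x y).trans (reach_symm hminv hρWinv hvy))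

end FinkAux
namespace FinkAux

open Relation Function

lemma adj_snoc (n : ℕ) {x y : Fin n → Bool} (h : (Q n).Adj x y) (s : Bool) :
    (Q (n + 1)).Adj (Fin.snoc x s) (Fin.snoc y s) := by
  obtain ⟨i, hi, hu⟩ := h
  refine ⟨i.castSucc, ?_, ?_⟩
  · simpa [Fin.snoc_castSucc] using hi
  · intro j hj
    induction j using Fin.lastCases with
    | last => simp [Fin.snoc_last] at hj
    | cast j =>
      rw [Fin.snoc_castSucc, Fin.snoc_castSucc] at hj
      exact congrArg Fin.castSucc (hu j hj)

lemma adj_precomp (n : ℕ) (t : Equiv.Perm (Fin n)) {x y : Fin n → Bool}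
    (h : (Q n).Adj x y) : (Q n).Adj (x ∘ t) (y ∘ t) := by
  obtain ⟨i, hi, hu⟩ := h
  refine ⟨t.symm i, ?_, ?_⟩
  · simpa [Equiv.apply_symm_apply] using hi
  · intro j hj
    have h2 : t j = i := hu (t j) hj
    rw [← h2, Equiv.symm_apply_apply]

/-- splitting the `(n+1)`-cube -/
def splitEquiv (n : ℕ) : (Fin (n + 1) → Bool) ≃ (Fin n → Bool) × Bool where
  toFun x := (fun i => x i.castSucc, x (Fin.last n))
  invFun p := Fin.snoc p.1 p.2
  left_inv x := by
    funext i
    induction i using Fin.lastCases with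
    | last => simp [Fin.snoc_last]
    | cast j => simp [Fin.snoc_castSucc]
  right_inv p := by
    refine prodEq ?_ ?_
    · funext i
      simp [Fin.snoc_castSucc]
    · simp [Fin.snoc_last]

lemma fink_step_cross (n : ℕ) (hn : 2 ≤ n)
    (IH : ∀ μ : (Fin n → Bool) → (Fin n → Bool), Involutive μ → (∀ x, μ x ≠ x) →
      ∃ ρ, Qext n μ ρ)
    (μ : (Fin (n + 1) → Bool) → (Fin (n + 1) → Bool)) (hμinv : Involutive μ)
    (hμfp : ∀ x, μ x ≠ x) (hcross : ∃ x, μ x (Fin.last n) ≠ x (Fin.last n)) :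
    ∃ ρ, Qext (n + 1) μ ρ := by
  classical
  set E := splitEquiv n with hEdef
  set m : (Fin n → Bool) × Bool → (Fin n → Bool) × Bool :=
    fun w => E (μ (E.symm w)) with hmdef
  have hminv : Involutive m := by
    intro w
    simp only [hmdef, Equiv.symm_apply_apply]
    rw [hμinv, Equiv.apply_symm_apply]
  have hmfp : ∀ w, m w ≠ w := by
    intro w h
    have h2 := congrArg E.symm h
    simp only [hmdef, Equiv.symm_apply_apply] at h2
    exact hμfp (E.symm w) h2
  have hsnd : ∀ y : Fin (n + 1) → Bool, (E y).2 = y (Fin.last n) := fun y => rfl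
  have hcross' : ∃ w, (m w).2 ≠ w.2 := by
    obtain ⟨x₀, hx₀⟩ := hcross
    refine ⟨E x₀, ?_⟩
    simp only [hmdef, Equiv.symm_apply_apply, hsnd]
    exact hx₀
  obtain ⟨ρW, hρWinv, hρWadj, hρWne, hρWconn⟩ := fink_step_core n hn IH m hminv hmfp hcross'
  set ρ : (Fin (n + 1) → Bool) → (Fin (n + 1) → Bool) :=
    fun x => E.symm (ρW (E x)) with hρdef
  have hρinv : Involutive ρ := by
    intro x
    simp only [hρdef, Equiv.apply_symm_apply]
    rw [hρWinv, Equiv.symm_apply_apply]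
  have hρadj : ∀ x, (Q (n + 1)).Adj x (ρ x) := by
    intro x
    have h1 := (hρWadj (E x)).1
    have h2 := (hρWadj (E x)).2
    have h3 := adj_snoc n h1 ((E x).2)
    have hx : Fin.snoc (E x).1 (E x).2 = x := E.symm_apply_apply x
    have hρx : ρ x = Fin.snoc (ρW (E x)).1 (E x).2 := by
      rw [← h2]
      rfl
    rw [hx, ← hρx] at h3
    exact h3
  have hρne : ∀ x, ρ x ≠ μ x := by
    intro x h
    have h2 := congrArg E h
    simp only [hρdef, Equiv.apply_symm_apply] at h2
    have h3 : E (μ x) = m (E x) := by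
      simp only [hmdef, Equiv.symm_apply_apply]
    rw [h3] at h2
    exact hρWne (E x) h2
  refine ⟨ρ, hρinv, hρadj, hρne, ?_⟩
  intro u v
  have h := hρWconn (E u) (E v)
  have h2 := ReflTransGen.lift (r := JStep m ρW) (p := JStep μ ρ) E.symm ?_ _ _ h
  · simpa [Function.onFun] using h2
  · intro a b hab
    rcases hab with rfl | rfl
    · refine Or.inl ?_
      simp only [hmdef, Equiv.symm_apply_apply]
    · refine Or.inr ?_
      simp only [hρdef, Equiv.apply_symm_apply]

lemma fink_step (n : ℕ) (hn : 2 ≤ n)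
    (IH : ∀ μ : (Fin n → Bool) → (Fin n → Bool), Involutive μ → (∀ x, μ x ≠ x) →
      ∃ ρ, Qext n μ ρ)
    (μ : (Fin (n + 1) → Bool) → (Fin (n + 1) → Bool)) (hμinv : Involutive μ)
    (hμfp : ∀ x, μ x ≠ x) : ∃ ρ, Qext (n + 1) μ ρ := by
  classical
  set x₀ : Fin (n + 1) → Bool := fun _ => false with hx₀def
  have hne : μ x₀ ≠ x₀ := hμfp x₀
  obtain ⟨j, hj⟩ := Function.ne_iff.mp hne
  set t : Equiv.Perm (Fin (n + 1)) := Equiv.swap j (Fin.last n) with htdef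
  set F : (Fin (n + 1) → Bool) → (Fin (n + 1) → Bool) := fun x => x ∘ t with hFdef
  have hF2 : ∀ x, F (F x) = x := by
    intro x
    funext i
    simp only [hFdef, Function.comp_apply, htdef]
    rw [Equiv.swap_apply_self]
  set μ' : (Fin (n + 1) → Bool) → (Fin (n + 1) → Bool) := fun x => F (μ (F x)) with hμ'def
  have hμ'inv : Involutive μ' := by
    intro x
    simp only [hμ'def]
    rw [hF2, hμinv, hF2]
  have hμ'fp : ∀ x, μ' x ≠ x := by
    intro x h
    have h2 := congrArg F h
    simp only [hμ'def] at h2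
    rw [hF2] at h2
    exact hμfp (F x) h2
  have hcross' : ∃ x, μ' x (Fin.last n) ≠ x (Fin.last n) := by
    refine ⟨F x₀, ?_⟩
    simp only [hμ'def]
    rw [hF2]
    show μ x₀ (t (Fin.last n)) ≠ x₀ (t (Fin.last n))
    rw [htdef]
    rw [Equiv.swap_apply_right]
    exact hj
  obtain ⟨ρ', hρ'inv, hρ'adj, hρ'ne, hρ'conn⟩ := fink_step_cross n hn IH μ' hμ'inv hμ'fp hcross'
  set ρ : (Fin (n + 1) → Bool) → (Fin (n + 1) → Bool) := fun x => F (ρ' (F x)) with hρdef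
  have hρinv : Involutive ρ := by
    intro x
    simp only [hρdef]
    rw [hF2, hρ'inv, hF2]
  have hρadj : ∀ x, (Q (n + 1)).Adj x (ρ x) := by
    intro x
    have h1 := hρ'adj (F x)
    have h2 := adj_precomp (n + 1) t h1
    have h3 : (F x) ∘ t = x := hF2 x
    have h4 : (ρ' (F x)) ∘ t = ρ x := rfl
    rwa [h3, h4] at h2
  have hρne : ∀ x, ρ x ≠ μ x := by
    intro x h
    have h2 := congrArg F h
    simp only [hρdef] at h2
    rw [hF2] at h2
    have h3 : F (μ x) = μ' (F x) := by
      simp only [hμ'def]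
      rw [hF2]
    rw [h3] at h2
    exact hρ'ne (F x) h2
  refine ⟨ρ, hρinv, hρadj, hρne, ?_⟩
  intro u v
  have h := hρ'conn (F u) (F v)
  have h2 := ReflTransGen.lift (r := JStep μ' ρ') (p := JStep μ ρ) F ?_ _ _ h
  · rw [Function.onFun, hF2, hF2] at h2
    exact h2
  · intro a b hab
    rcases hab with rfl | rfl
    · refine Or.inl ?_
      simp only [hμ'def]
      rw [hF2]
    · refine Or.inr ?_
      simp only [hρdef]
      rw [hF2]

theorem fink (n : ℕ) (hn : 2 ≤ n) (μ : (Fin n → Bool) → (Fin n → Bool))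
    (hμinv : Involutive μ) (hμfp : ∀ x, μ x ≠ x) : ∃ ρ, Qext n μ ρ := by
  induction n, hn using Nat.le_induction with
  | base => exact fink_base μ hμinv hμfp
  | succ n hn IH =>
    exact fink_step n hn (fun μ' h1 h2 => IH μ' h1 h2) μ hμinv hμfp

end FinkAux
namespace FinkAux

open Relation Function SimpleGraph

/-- a walk along a chain of adjacent vertices -/
def chainWalk {V : Type*} (G : SimpleGraph V) (a : ℕ → V) (h : ∀ k, G.Adj (a k) (a (k + 1))) :
    (s : ℕ) → (len : ℕ) → G.Walk (a s) (a (s + len))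
  | s, 0 => SimpleGraph.Walk.nil
  | s, (len + 1) =>
      SimpleGraph.Walk.cons (h s)
        ((chainWalk G a h (s + 1) len).copy rfl (congrArg a (by omega)))

lemma chainWalk_support {V : Type*} (G : SimpleGraph V) (a : ℕ → V)
    (h : ∀ k, G.Adj (a k) (a (k + 1))) (s len : ℕ) :
    (chainWalk G a h s len).support = (List.range (len + 1)).map (fun t => a (s + t)) := by
  induction len generalizing s with
  | zero => simp [chainWalk, List.range_succ]
  | succ len ih =>
    show (SimpleGraph.Walk.cons _ _).support = _
    rw [SimpleGraph.Walk.support_cons, SimpleGraph.Walk.support_copy, ih (s + 1),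
      List.range_succ_eq_map (n := len + 1), List.map_cons, List.map_map]
    refine congrArg₂ List.cons rfl ?_
    apply List.map_congr_left
    intro t _
    show a (s + 1 + t) = a (s + (t + 1))
    congr 1
    omega

lemma chainWalk_edges {V : Type*} (G : SimpleGraph V) (a : ℕ → V)
    (h : ∀ k, G.Adj (a k) (a (k + 1))) (s len : ℕ) :
    (chainWalk G a h s len).edges = (List.range len).map (fun t => s(a (s + t), a (s + t + 1))) := by
  induction len generalizing s with
  | zero => simp [chainWalk]
  | succ len ih =>
    show (SimpleGraph.Walk.cons _ _).edges = _
    rw [SimpleGraph.Walk.edges_cons, SimpleGraph.Walk.edges_copy, ih (s + 1),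
      List.range_succ_eq_map (n := len), List.map_cons, List.map_map]
    refine congrArg₂ List.cons rfl ?_
    apply List.map_congr_left
    intro t _
    show s(a (s + 1 + t), a (s + 1 + t + 1)) = s(a (s + (t + 1)), a (s + (t + 1) + 1))
    have h1 : s + 1 + t = s + (t + 1) := by omega
    rw [h1]

lemma ham_cycle_of_two_matchings {V : Type*} [Fintype V] [DecidableEq V] [Nonempty V]
    (μ ρ : V → V) (hμinv : Involutive μ) (hμfp : ∀ x, μ x ≠ x)
    (hρinv : Involutive ρ) (hρfp : ∀ x, ρ x ≠ x) (hρμ : ∀ x, ρ x ≠ μ x)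
    (hconn : ∀ u v, ReflTransGen (JStep μ ρ) u v) :
    ∃ (b : V) (c : (⊤ : SimpleGraph V).Walk b b), c.IsHamiltonianCycle ∧
      ∀ e, e ∈ c.edges ↔ ∃ v, e = s(v, μ v) ∨ e = s(v, ρ v) := by
  classical
  obtain ⟨v₀⟩ := ‹Nonempty V›
  set τ : V → V := fun x => ρ (μ x) with hτdef
  have hτ : ∀ x, τ x = ρ (μ x) := fun _ => rfl
  have hτinj : Function.Injective τ := fun x y hxy => by
    have := hρinv.injective hxy
    exact hμinv.injective this
  -- period
  have hexp : ∃ q, 0 < q ∧ τ^[q] v₀ = v₀ := by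
    obtain ⟨i, j, hij, heq⟩ := Finite.exists_ne_map_eq_of_infinite (fun i : ℕ => τ^[i] v₀)
    have key : ∀ i j : ℕ, i < j → τ^[i] v₀ = τ^[j] v₀ → ∃ q, 0 < q ∧ τ^[q] v₀ = v₀ := by
      intro i j hlt he
      refine ⟨j - i, by omega, ?_⟩
      have h1 : τ^[j] v₀ = τ^[i] (τ^[j - i] v₀) := by
        rw [← Function.iterate_add_apply]
        congr 1
        omega
      rw [h1] at he
      exact ((hτinj.iterate i) he).symm
    rcases hij.lt_or_gt with h | h
    · exact key i j h heq
    · exact key j i h heq.symm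
  set p : ℕ := sInf {q | 0 < q ∧ τ^[q] v₀ = v₀} with hpdef
  have hp : 0 < p ∧ τ^[p] v₀ = v₀ := Nat.sInf_mem hexp
  have hpmin : ∀ q, 0 < q → q < p → τ^[q] v₀ ≠ v₀ := by
    intro q h1 h2 h3
    exact (Nat.notMem_of_lt_sInf h2) ⟨h1, h3⟩
  have hp2 : 2 ≤ p := by
    rcases Nat.lt_or_ge p 2 with h | h
    · exfalso
      have hp1 : p = 1 := by omega
      have h2 : τ^[1] v₀ = v₀ := hp1 ▸ hp.2
      simp only [Function.iterate_one, hτ] at h2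
      have h3 : μ v₀ = ρ v₀ := by
        have := congrArg ρ h2
        rwa [hρinv] at this
      exact hρμ v₀ h3.symm
    · exact h
  have hiter_pred : ∀ k : ℕ, 1 ≤ k → τ^[k] v₀ = τ (τ^[k - 1] v₀) := by
    intro k hk
    have h := Function.iterate_succ_apply' τ (k - 1) v₀
    have h2 : (k - 1).succ = k := by omega
    rwa [h2] at h
  -- the cyclic sequence
  set a : ℕ → V := fun i => if Even i then τ^[i / 2] v₀ else μ (τ^[i / 2] v₀) with hadef
  have ha_even : ∀ i, Even i → a i = τ^[i / 2] v₀ := by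
    intro i hi
    simp [hadef, hi]
  have ha_odd : ∀ i, ¬ Even i → a i = μ (τ^[i / 2] v₀) := by
    intro i hi
    simp [hadef, hi]
  have hstep_even : ∀ k, Even k → a (k + 1) = μ (a k) := by
    intro k hk
    have h1 : ¬ Even (k + 1) := by
      rw [Nat.even_iff] at *
      omega
    rw [ha_even k hk, ha_odd (k + 1) h1]
    congr 2
    rw [Nat.even_iff] at hk
    omega
  have hstep_odd : ∀ k, ¬ Even k → a (k + 1) = ρ (a k) := by
    intro k hk
    have h1 : Even (k + 1) := by
      rw [Nat.even_iff] at *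
      omega
    rw [ha_even (k + 1) h1, ha_odd k hk]
    have h2 : (k + 1) / 2 = k / 2 + 1 := by
      rw [Nat.even_iff] at hk
      omega
    rw [h2, Function.iterate_succ_apply', hτ]
  have hadj : ∀ k, (⊤ : SimpleGraph V).Adj (a k) (a (k + 1)) := by
    intro k
    rw [SimpleGraph.top_adj]
    by_cases hk : Even k
    · rw [hstep_even k hk]
      exact fun h => hμfp (a k) h.symm
    · rw [hstep_odd k hk]
      exact fun h => hρfp (a k) h.symm
  -- a is injective on [0, 2p)
  have no_bad : ∀ s, τ^[s] v₀ ≠ μ v₀ := by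
    intro s hs
    have shift : ∀ k, k ≤ s → τ^[s - k] v₀ = μ (τ^[k] v₀) := by
      intro k
      induction k with
      | zero => intro _; simpa using hs
      | succ k ih =>
        intro hk
        have h1 := ih (by omega)
        have h2 : τ^[s - k] v₀ = τ (τ^[s - k - 1] v₀) := hiter_pred (s - k) (by omega)
        rw [h2, hτ] at h1
        have h4 := congrArg ρ h1
        rw [hρinv] at h4
        -- h4 : μ (τ^[s-k-1] v₀) = ρ (μ (τ^[k] v₀))
        have h5 := congrArg μ h4
        rw [hμinv] at h5
        -- h5 : τ^[s-k-1] v₀ = μ (ρ (μ (τ^[k] v₀)))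
        have h6 : ρ (μ (τ^[k] v₀)) = τ^[k + 1] v₀ := by
          rw [Function.iterate_succ_apply', hτ]
        rw [h6] at h5
        have h7 : s - (k + 1) = s - k - 1 := by omega
        rw [h7]
        exact h5
    rcases Nat.even_or_odd s with ⟨k, hk⟩ | ⟨k, hk⟩
    · have h1 := shift k (by omega)
      have h2 : s - k = k := by omega
      rw [h2] at h1
      exact hμfp (τ^[k] v₀) h1.symm
    · have h1 := shift (k + 1) (by omega)
      have h2 : s - (k + 1) = k := by omega
      rw [h2] at h1
      have h3 : τ^[k + 1] v₀ = ρ (μ (τ^[k] v₀)) := by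
        rw [Function.iterate_succ_apply', hτ]
      rw [h3] at h1
      have h4 := congrArg μ h1
      rw [hμinv] at h4
      -- h4 : μ (τ^[k] v₀) = ρ (μ (τ^[k] v₀))
      exact hρfp (μ (τ^[k] v₀)) h4.symm
  have bad_shift : ∀ j i, τ^[i] v₀ = μ (τ^[j] v₀) → τ^[i + j] v₀ = μ v₀ := by
    intro j
    induction j with
    | zero => intro i h; simpa using h
    | succ j ih =>
      intro i h
      have h1 : τ^[j + 1] v₀ = ρ (μ (τ^[j] v₀)) := by
        rw [Function.iterate_succ_apply', hτ]
      rw [h1] at h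
      have h2 := congrArg μ h
      rw [hμinv] at h2
      have h3 := congrArg ρ h2
      rw [hρinv] at h3
      -- h3 : ρ (μ (τ^[i] v₀)) = μ (τ^[j] v₀)
      have h4 : τ^[i + 1] v₀ = μ (τ^[j] v₀) := by
        rw [Function.iterate_succ_apply', hτ]
        exact h3
      have h5 := ih (i + 1) h4
      have h6 : i + 1 + j = i + (j + 1) := by omega
      rwa [h6] at h5
  have hbad : ∀ i j, τ^[i] v₀ ≠ μ (τ^[j] v₀) := fun i j h => no_bad (i + j) (bad_shift j i h)
  have horb : ∀ i j, i < j → j < p → τ^[i] v₀ ≠ τ^[j] v₀ := by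
    intro i j hij hjp h
    have h1 : τ^[j] v₀ = τ^[i] (τ^[j - i] v₀) := by
      rw [← Function.iterate_add_apply]
      congr 1
      omega
    rw [h1] at h
    have h2 := (hτinj.iterate i) h
    exact hpmin (j - i) (by omega) (by omega) h2.symm
  have keyorb : ∀ i j, i < p → j < p → τ^[i] v₀ = τ^[j] v₀ → i = j := by
    intro i j hi hj h
    rcases lt_trichotomy i j with hlt | he | hlt
    · exact absurd h (horb _ _ hlt hj)
    · exact he
    · exact absurd h.symm (horb _ _ hlt hi)
  have hdiv : ∀ i, i < 2 * p → i / 2 < p := by intro i h; omega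
  have hainj : ∀ i j, i < 2 * p → j < 2 * p → a i = a j → i = j := by
    intro i j hi hj h
    by_cases hEi : Even i <;> by_cases hEj : Even j
    · rw [ha_even i hEi, ha_even j hEj] at h
      have := keyorb _ _ (hdiv i hi) (hdiv j hj) h
      rw [Nat.even_iff] at hEi hEj
      omega
    · rw [ha_even i hEi, ha_odd j hEj] at h
      exact absurd h (hbad _ _)
    · rw [ha_odd i hEi, ha_even j hEj] at h
      exact absurd h.symm (hbad _ _)
    · rw [ha_odd i hEi, ha_odd j hEj] at h
      have h2 := hμinv.injective h
      have := keyorb _ _ (hdiv i hi) (hdiv j hj) h2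
      rw [Nat.even_iff] at hEi hEj
      omega
  -- periodicity
  have hper : ∀ i, a (i + 2 * p) = a i := by
    intro i
    have hE : Even (i + 2 * p) ↔ Even i := by
      rw [Nat.even_iff, Nat.even_iff]
      omega
    have hdiv2 : (i + 2 * p) / 2 = i / 2 + p := by omega
    have hiter : τ^[i / 2 + p] v₀ = τ^[i / 2] v₀ := by
      rw [Function.iterate_add_apply, hp.2]
    by_cases hEi : Even i
    · rw [ha_even i hEi, ha_even _ (hE.mpr hEi), hdiv2, hiter]
    · rw [ha_odd i hEi, ha_odd _ (fun hc => hEi (hE.mp hc)), hdiv2, hiter]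
  have hperq : ∀ q i, a (i + 2 * p * q) = a i := by
    intro q
    induction q with
    | zero => intro i; simp
    | succ q ih =>
      intro i
      have h1 : i + 2 * p * (q + 1) = (i + 2 * p * q) + 2 * p := by ring
      rw [h1, hper, ih]
  -- surjectivity
  have ha0 : a 0 = v₀ := by
    rw [ha_even 0 (by exact ⟨0, rfl⟩)]
    simp
  have haN : a (2 * p) = a 0 := by
    have := hper 0
    simpa using this
  have hρ_even : ∀ k, 1 ≤ k → ρ (τ^[k] v₀) = μ (τ^[k - 1] v₀) := by
    intro k hk
    have h1 : τ^[k] v₀ = ρ (μ (τ^[k - 1] v₀)) := by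
      rw [hiter_pred k hk, hτ]
    rw [h1, hρinv]
  have hsurj0 : ∀ w, ∃ i, a i = w := by
    intro w
    have hZ : ∀ z ∈ {z | ∃ i, a i = z}, ∀ y, JStep μ ρ z y → ∃ i, a i = y := by
      rintro z ⟨i, rfl⟩ y (rfl | rfl)
      · by_cases hEi : Even i
        · exact ⟨i + 1, hstep_even i hEi⟩
        · refine ⟨2 * (i / 2), ?_⟩
          rw [ha_even _ ⟨i / 2, by omega⟩, ha_odd i hEi, hμinv]
          congr 1
          omega
      · by_cases hEi : Even i
        · rw [ha_even i hEi]
          by_cases hk : i / 2 = 0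
          · refine ⟨2 * (p - 1) + 1, ?_⟩
            rw [hk]
            simp only [Function.iterate_zero, id_eq]
            have h1 : ρ v₀ = μ (τ^[p - 1] v₀) := by
              have := hρ_even p (by omega)
              rwa [hp.2] at this
            rw [h1, ha_odd _ (fun ⟨r, hr⟩ => by omega)]
            congr 2
            omega
          · refine ⟨2 * (i / 2 - 1) + 1, ?_⟩
            rw [hρ_even (i / 2) (by omega), ha_odd _ (fun ⟨r, hr⟩ => by omega)]
            congr 2
            omega
        · exact ⟨i + 1, hstep_odd i hEi⟩
    exact mem_of_reach (s := {z | ∃ i, a i = z}) hZ ⟨0, ha0⟩ (hconn v₀ w)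
  have hsurj : ∀ w, ∃ i, i < 2 * p ∧ a i = w := by
    intro w
    obtain ⟨i, hi⟩ := hsurj0 w
    refine ⟨i % (2 * p), Nat.mod_lt _ (by omega), ?_⟩
    have h1 : i = i % (2 * p) + 2 * p * (i / (2 * p)) := (Nat.mod_add_div i (2 * p)).symm
    rw [← hi]
    conv_rhs => rw [h1]
    rw [hperq]
  -- build the walk
  set c : (⊤ : SimpleGraph V).Walk (a 0) (a 0) :=
    (chainWalk ⊤ a hadj 0 (2 * p)).copy rfl (by rw [Nat.zero_add, haN]) with hcdef
  have hcsupp : c.support = (List.range (2 * p + 1)).map (fun t => a t) := by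
    rw [hcdef, SimpleGraph.Walk.support_copy, chainWalk_support]
    simp only [Nat.zero_add]
  have hcedges : c.edges = (List.range (2 * p)).map (fun t => s(a t, a (t + 1))) := by
    rw [hcdef, SimpleGraph.Walk.edges_copy, chainWalk_edges]
    simp only [Nat.zero_add]
  have hctail : c.support.tail = (List.range (2 * p)).map (fun t => a (t + 1)) := by
    rw [hcsupp, List.range_succ_eq_map, List.map_cons, List.tail_cons, List.map_map]
    rfl
  -- edges nodup
  have hedge_inj : ∀ t t', t < 2 * p → t' < 2 * p → s(a t, a (t + 1)) = s(a t', a (t' + 1)) →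
      t = t' := by
    have key : ∀ t t', t < t' → t' < 2 * p → s(a t, a (t + 1)) = s(a t', a (t' + 1)) → False := by
      intro t t' hlt hub h
      rw [Sym2.eq_iff] at h
      rcases h with ⟨h1, h2⟩ | ⟨h1, h2⟩
      · exact absurd (hainj t t' (by omega) (by omega) h1) (by omega)
      · have ht' : t' = t + 1 := (hainj t' (t + 1) (by omega) (by omega) h2.symm).symm ▸ rfl
        have ht'2 : t' = t + 1 := hainj t' (t + 1) (by omega) (by omega) h2.symm
        subst ht'2
        -- h1 : a t = a (t + 2)
        by_cases hc : t + 2 < 2 * p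
        · exact absurd (hainj t (t + 2) (by omega) hc h1) (by omega)
        · have h3 : t + 2 = 2 * p := by omega
          rw [h3, haN] at h1
          have h4 := hainj t 0 (by omega) (by omega) h1
          omega
    intro t t' ht ht' h
    rcases lt_trichotomy t t' with hlt | he | hlt
    · exact absurd h (fun hh => key t t' hlt ht' hh)
    · exact he
    · exact absurd h.symm (fun hh => key t' t hlt ht hh)
  have hedges_nodup : c.edges.Nodup := by
    rw [hcedges]
    refine List.Nodup.map_on ?_ List.nodup_range
    intro t ht t' ht' h
    rw [List.mem_range] at ht ht'
    exact hedge_inj t t' ht ht' h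
  have hcne : c ≠ SimpleGraph.Walk.nil := by
    intro h
    have h2 := congrArg SimpleGraph.Walk.edges h
    rw [hcedges] at h2
    simp only [SimpleGraph.Walk.edges_nil] at h2
    have h3 := congrArg List.length h2
    simp at h3
    omega
  have htail_nodup : c.support.tail.Nodup := by
    rw [hctail]
    refine List.Nodup.map_on ?_ List.nodup_range
    intro t ht t' ht' h
    rw [List.mem_range] at ht ht'
    by_cases hc : t + 1 < 2 * p
    · by_cases hc' : t' + 1 < 2 * p
      · have := hainj _ _ hc hc' h
        omega
      · have h3 : t' + 1 = 2 * p := by omega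
        rw [h3, haN] at h
        have := hainj _ _ hc (by omega) h
        omega
    · have h3 : t + 1 = 2 * p := by omega
      by_cases hc' : t' + 1 < 2 * p
      · rw [h3, haN] at h
        have := hainj _ _ (by omega) hc' h
        omega
      · omega
  have hmem_tail : ∀ w, w ∈ c.support.tail := by
    intro w
    rw [hctail]
    obtain ⟨i, hi, rfl⟩ := hsurj w
    rcases Nat.eq_zero_or_pos i with h0 | h1
    · subst h0
      rw [← haN]
      refine List.mem_map.mpr ⟨2 * p - 1, ?_, ?_⟩
      · rw [List.mem_range]; omega
      · congr 1; omega
    · refine List.mem_map.mpr ⟨i - 1, ?_, ?_⟩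
      · rw [List.mem_range]; omega
      · congr 1; omega
  have hcyc : c.IsCycle := ⟨⟨⟨hedges_nodup⟩, hcne⟩, htail_nodup⟩
  refine ⟨a 0, c, ?_, ?_⟩
  · rw [SimpleGraph.Walk.isHamiltonianCycle_iff_isCycle_and_support_count_tail_eq_one]
    exact ⟨hcyc, fun w => List.count_eq_one_of_mem htail_nodup (hmem_tail w)⟩
  · intro e
    rw [hcedges]
    constructor
    · intro he
      obtain ⟨t, ht, rfl⟩ := List.mem_map.mp he
      rw [List.mem_range] at ht
      by_cases hEt : Even t
      · exact ⟨a t, Or.inl (by rw [hstep_even t hEt])⟩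
      · exact ⟨a t, Or.inr (by rw [hstep_odd t hEt])⟩
    · rintro ⟨v, rfl | rfl⟩
      · obtain ⟨i, hi, rfl⟩ := hsurj v
        by_cases hEi : Even i
        · refine List.mem_map.mpr ⟨i, List.mem_range.mpr hi, ?_⟩
          rw [hstep_even i hEi]
        · have h1 : a i = μ (a (i - 1)) := by
            have h2 := hstep_even (i - 1) (by rw [Nat.even_iff] at *; omega)
            rw [show i - 1 + 1 = i by rw [Nat.even_iff] at hEi; omega] at h2
            exact h2
          have h3 : μ (a i) = a (i - 1) := by rw [h1, hμinv]
          refine List.mem_map.mpr ⟨i - 1, List.mem_range.mpr (by omega), ?_⟩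
          rw [show i - 1 + 1 = i by rw [Nat.even_iff] at hEi; omega, h3, Sym2.eq_swap]
      · obtain ⟨i, hi, rfl⟩ := hsurj v
        by_cases hEi : Even i
        · rcases Nat.eq_zero_or_pos i with h0 | h1
          · subst h0
            have h2 : a (2 * p - 1 + 1) = ρ (a (2 * p - 1)) := by
              apply hstep_odd
              rw [Nat.even_iff] at *
              omega
            rw [show 2 * p - 1 + 1 = 2 * p by omega, haN] at h2
            have h3 : ρ (a 0) = a (2 * p - 1) := by rw [h2, hρinv]
            refine List.mem_map.mpr ⟨2 * p - 1, List.mem_range.mpr (by omega), ?_⟩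
            rw [show 2 * p - 1 + 1 = 2 * p by omega, haN, h3, Sym2.eq_swap]
          · have h2 : a i = ρ (a (i - 1)) := by
              have h3 := hstep_odd (i - 1) (by rw [Nat.even_iff] at *; omega)
              rw [show i - 1 + 1 = i by omega] at h3
              exact h3
            have h3 : ρ (a i) = a (i - 1) := by rw [h2, hρinv]
            refine List.mem_map.mpr ⟨i - 1, List.mem_range.mpr (by omega), ?_⟩
            rw [show i - 1 + 1 = i by omega, h3, Sym2.eq_swap]
        · refine List.mem_map.mpr ⟨i, List.mem_range.mpr hi, ?_⟩
          rw [hstep_odd i hEi]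

end FinkAux

theorem stmt_11 (n : ℕ) (hn : 2 ≤ n) (M : Finset (Sym2 (Fin n → Bool)))
    (hM : (M : Set (Sym2 (Fin n → Bool))) ⊆ (⊤ : SimpleGraph (Fin n → Bool)).edgeSet)
    (hpm : ∀ v, ∃! e, e ∈ M ∧ v ∈ e) :
    ∃ R : Finset (Sym2 (Fin n → Bool)),
      (R : Set (Sym2 (Fin n → Bool))) ⊆ (Q n).edgeSet ∧
      (∀ v, ∃! e, e ∈ R ∧ v ∈ e) ∧
      ∃ (a : Fin n → Bool) (c : (⊤ : SimpleGraph (Fin n → Bool)).Walk a a),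
        c.IsHamiltonianCycle ∧ ∀ e, e ∈ c.edges ↔ e ∈ M ∪ R := by
  classical
  have hex : ∀ v, ∃ e, e ∈ M ∧ v ∈ e := fun v => (hpm v).exists
  set ed : (Fin n → Bool) → Sym2 (Fin n → Bool) := fun v => (hex v).choose with heddef
  have hedM : ∀ v, ed v ∈ M := fun v => (hex v).choose_spec.1
  have hedmem : ∀ v, v ∈ ed v := fun v => (hex v).choose_spec.2
  have heduniq : ∀ v e, e ∈ M → v ∈ e → e = ed v := fun v e he hv =>
    (hpm v).unique ⟨he, hv⟩ ⟨hedM v, hedmem v⟩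
  set μ : (Fin n → Bool) → (Fin n → Bool) := fun v => Sym2.Mem.other' (hedmem v) with hμdef
  have hother : ∀ v, s(v, μ v) = ed v := fun v => Sym2.other_spec' (hedmem v)
  have hμmem : ∀ v, μ v ∈ ed v := fun v => Sym2.other_mem' (hedmem v)
  have hμfp : ∀ v, μ v ≠ v := by
    intro v h
    have hdiag : ¬ (ed v).IsDiag := by
      have h2 := hM (hedM v)
      rwa [SimpleGraph.edgeSet_top, Set.mem_compl_iff, Sym2.mem_diagSet] at h2
    apply hdiag
    rw [← hother v]
    rw [Sym2.mk_isDiag_iff]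
    exact h.symm
  have hμinv : Function.Involutive μ := by
    intro v
    have h1 : ed v = ed (μ v) := heduniq (μ v) (ed v) (hedM v) (hμmem v)
    have h2 : s(μ v, μ (μ v)) = ed (μ v) := hother (μ v)
    rw [← h1, ← hother v] at h2
    rw [Sym2.eq_iff] at h2
    rcases h2 with ⟨ha, hb⟩ | ⟨ha, hb⟩
    · exact hb.trans ha
    · exact hb
  obtain ⟨ρ, hρinv, hρadj, hρne, hρconn⟩ := FinkAux.fink n hn μ hμinv hμfp
  have hρfp : ∀ x, ρ x ≠ x := fun x => (hρadj x).ne'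
  set R : Finset (Sym2 (Fin n → Bool)) := Finset.image (fun v => s(v, ρ v)) Finset.univ
    with hRdef
  have hRsub : (R : Set (Sym2 (Fin n → Bool))) ⊆ (Q n).edgeSet := by
    intro e he
    obtain ⟨v, -, rfl⟩ := Finset.mem_image.mp (Finset.mem_coe.mp he)
    rw [SimpleGraph.mem_edgeSet]
    exact hρadj v
  have hRpm : ∀ v, ∃! e, e ∈ R ∧ v ∈ e := by
    intro v
    refine ⟨s(v, ρ v), ⟨Finset.mem_image_of_mem _ (Finset.mem_univ v), Sym2.mem_mk_left v _⟩, ?_⟩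
    rintro e ⟨heR, hve⟩
    obtain ⟨u, -, rfl⟩ := Finset.mem_image.mp heR
    rcases Sym2.mem_iff.mp hve with rfl | h
    · rfl
    · have hu : u = ρ v := by
        have h2 := congrArg ρ h
        rw [hρinv u] at h2
        exact h2.symm
      rw [hu, hρinv v]
      exact Sym2.eq_swap
  obtain ⟨b, c, hham, hedges⟩ :=
    FinkAux.ham_cycle_of_two_matchings μ ρ hμinv hμfp hρinv hρfp hρne hρconn
  refine ⟨R, hRsub, hRpm, b, c, hham, ?_⟩
  intro e
  rw [hedges e, Finset.mem_union]
  constructor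
  · rintro ⟨v, rfl | rfl⟩
    · left
      rw [hother v]
      exact hedM v
    · right
      exact Finset.mem_image_of_mem _ (Finset.mem_univ v)
  · rintro (he | he)
    · revert he
      induction e using Sym2.ind with
      | _ x y =>
        intro he
        have h1 : s(x, y) = ed x := heduniq x _ he (Sym2.mem_mk_left x y)
        exact ⟨x, Or.inl (h1.trans (hother x).symm)⟩
    · obtain ⟨v, -, rfl⟩ := Finset.mem_image.mp he
      exact ⟨v, Or.inr rfl⟩
end
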